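/- arXiv:math/0601600 — 8 statements merged into one kernel-verified Lean document; each statement's English description precedes it below -/
import Mathlib

section
/- Let p(z) = ∑_{k=0}^{n} a_k z^k be a complex polynomial of degree n ≥ 1 (so a_n ≠ 0). If all the zeros of p lie on the unit circle, then a_k · conj(a_0) = a_n · conj(a_{n-k}) for every k with 0 ≤ k ≤ n-1. -/
open Polynomial Complex

lemma rev_prod_aux (m : Multiset (Polynomial ℂ)) :
    m.prod.reverse = (m.map Polynomial.reverse).prod := by
  induction m using Multiset.induction with
  | empty =>
    simp only [Multiset.map_zero, Multiset.prod_zero]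
    rw [← Polynomial.C_1, Polynomial.reverse_C]
  | cons a s ih => simp [Polynomial.reverse_mul_of_domain, ih]

lemma rev_lin_aux (c : ℂ) : (X - C c).reverse = 1 - C c * X := by
  ext m
  rw [coeff_reverse, natDegree_X_sub_C]
  match m with
  | 0 => simp [revAt_le, coeff_one, coeff_X]
  | 1 => simp [revAt_le, coeff_one, coeff_X]
  | (m+2) =>
    rw [← revAtFun_eq, revAtFun, if_neg (by omega)]
    simp [coeff_X, coeff_one]

/-- If a complex polynomial `p = ∑ aₖ zᵏ` of degree `n ≥ 1` has all its
zeros on the unit circle, then `aₖ · conj(a₀) = aₙ · conj(a_{n-k})` for `0 ≤ k ≤ n-1`. -/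
theorem stmt_0 (n : ℕ) (hn : 1 ≤ n) (p : Polynomial ℂ) (hdeg : p.natDegree = n)
    (hroots : ∀ z : ℂ, p.eval z = 0 → ‖z‖ = 1) :
    ∀ k : ℕ, k ≤ n - 1 →
      p.coeff k * (starRingEnd ℂ) (p.coeff 0) =
        p.coeff n * (starRingEnd ℂ) (p.coeff (n - k)) := by
  intro k hk
  have hp0 : p ≠ 0 := by
    intro h; rw [h] at hdeg; simp at hdeg; omega
  have hs : p.Splits := IsAlgClosed.splits p
  have hroots' : ∀ r ∈ p.roots, ‖r‖ = 1 := by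
    intro r hr
    exact hroots r ((Polynomial.mem_roots hp0).1 hr)
  have hrc : ∀ r ∈ p.roots, (starRingEnd ℂ) r * r = 1 := by
    intro r hr
    have := hroots' r hr
    rw [mul_comm, Complex.mul_conj, Complex.normSq_eq_norm_sq, this]
    norm_num
  have hlc : p.leadingCoeff = p.coeff n := by rw [leadingCoeff, hdeg]
  have hp : p = C (p.coeff n) * (p.roots.map fun a => X - C a).prod := by
    rw [← hlc]; exact hs.eq_prod_roots
  set q := (p.map (starRingEnd ℂ)).reverse with hqdef
  have hmapdeg : (p.map (starRingEnd ℂ)).natDegree = n := by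
    rw [Polynomial.natDegree_map_eq_of_injective (RingHom.injective _), hdeg]
  have hqc : ∀ j, j ≤ n → q.coeff j = (starRingEnd ℂ) (p.coeff (n - j)) := by
    intro j hj
    rw [hqdef, coeff_reverse, hmapdeg, revAt_le hj, Polynomial.coeff_map]
  -- q = C (conj a₀) * prod (X - C r)
  have hmap : p.map (starRingEnd ℂ) =
      C ((starRingEnd ℂ) (p.coeff n)) *
        (p.roots.map fun a => X - C ((starRingEnd ℂ) a)).prod := by
    conv_lhs => rw [hp]
    rw [Polynomial.map_mul, Polynomial.map_C, Polynomial.map_multiset_prod,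
      Multiset.map_map]
    congr 1
    exact congrArg Multiset.prod (Multiset.map_congr rfl (fun a _ => by
      simp only [Function.comp_apply, Polynomial.map_sub, Polynomial.map_X, Polynomial.map_C]))
  have ha0 : p.coeff 0 = p.coeff n * (p.roots.map fun a => -a).prod := by
    conv_lhs => rw [Polynomial.coeff_zero_eq_eval_zero, hp]
    rw [eval_mul, eval_C, Polynomial.eval_multiset_prod, Multiset.map_map]
    congr 1
    exact congrArg Multiset.prod (Multiset.map_congr rfl (fun a _ => by
      simp only [Function.comp_apply, eval_sub, eval_X, eval_C, zero_sub]))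
  have hq : q = C ((starRingEnd ℂ) (p.coeff 0)) * (p.roots.map fun a => X - C a).prod := by
    rw [hqdef, hmap, Polynomial.reverse_mul_of_domain, Polynomial.reverse_C,
      rev_prod_aux, Multiset.map_map]
    have hfac : (p.roots.map fun a => Polynomial.reverse (X - C ((starRingEnd ℂ) a))).prod
        = (p.roots.map fun a => C (-(starRingEnd ℂ) a) * (X - C a)).prod := by
      refine congrArg Multiset.prod (Multiset.map_congr rfl (fun a ha => ?_))
      rw [rev_lin_aux, mul_sub, ← C_mul]
      have h2 : (-(starRingEnd ℂ) a) * a = -1 := by rw [neg_mul, hrc a ha]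
      rw [h2, map_neg, map_neg, map_one]
      ring
    simp only [Function.comp_def]
    rw [hfac, Multiset.prod_map_mul, ← mul_assoc]
    congr 1
    have hC : (Multiset.map (fun a => C (-(starRingEnd ℂ) a)) p.roots).prod
        = C ((Multiset.map (fun a => -(starRingEnd ℂ) a) p.roots).prod) := by
      rw [map_multiset_prod, Multiset.map_map]
      rfl
    rw [hC, ← C_mul]
    congr 1
    rw [ha0, map_mul, map_multiset_prod, Multiset.map_map]
    congr 1
  have hk' : k ≤ n := by omega
  have hnk : n - k ≤ n := by omega
  have e1 : p.coeff k = p.coeff n * ((p.roots.map fun a => X - C a).prod).coeff k := by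
    conv_lhs => rw [hp]; rw [Polynomial.coeff_C_mul]
  have e2 : (starRingEnd ℂ) (p.coeff (n - k)) =
      (starRingEnd ℂ) (p.coeff 0) * ((p.roots.map fun a => X - C a).prod).coeff k := by
    rw [← hqc k hk', hq, Polynomial.coeff_C_mul]
  rw [e1, e2]; ring
end

section
/- Let q be a monic complex polynomial of degree n ≥ 2 and let α be a zero of q. If R > 0 is such that |w - α| = R for every zero w of the derivative q', then (n-k-1)! · n · R^{2k} · q^{(k+1)}(α) = k! · q'(α) · conj(q^{(n-k)}(α)) for every k with 0 ≤ k ≤ n-1. -/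
open Polynomial Complex

private lemma coeff_X_sub_C_mul_succ (a : ℂ) (F : ℂ[X]) (i : ℕ) :
    ((X - C a) * F).coeff (i + 1) = F.coeff i - a * F.coeff (i + 1) := by
  rw [sub_mul, coeff_sub, coeff_X_mul, coeff_C_mul]

private lemma coeff_X_sub_C_mul_zero (a : ℂ) (F : ℂ[X]) :
    ((X - C a) * F).coeff 0 = -a * F.coeff 0 := by
  rw [mul_coeff_zero]
  simp

private lemma key (r : ℂ) (s : Multiset ℂ)
    (hs : ∀ z ∈ s, z * (starRingEnd ℂ) z = r) :
    ∀ j ≤ Multiset.card s,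
      ((s.map fun z => X - C ((starRingEnd ℂ) z)).prod.coeff j) *
          ((s.map fun z => X - C z).prod.coeff 0) =
        r ^ (Multiset.card s - j) *
          ((s.map fun z => X - C z).prod.coeff (Multiset.card s - j)) := by
  induction s using Multiset.induction_on with
  | empty =>
      intro j hj
      simp only [Multiset.card_zero, Nat.le_zero] at hj
      subst hj
      simp
  | cons a s ih =>
      have ha : a * (starRingEnd ℂ) a = r := hs a (Multiset.mem_cons_self a s)
      have hs' : ∀ z ∈ s, z * (starRingEnd ℂ) z = r :=
        fun z hz => hs z (Multiset.mem_cons_of_mem hz)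
      have IH := ih hs'
      set m := Multiset.card s with hm
      set F := (s.map fun z => X - C z).prod with hF
      set G := (s.map fun z => X - C ((starRingEnd ℂ) z)).prod with hG
      have hFdeg : F.natDegree = m := natDegree_multiset_prod_X_sub_C_eq_card s
      have hGdeg : G.natDegree = m := by
        have h := natDegree_multiset_prod_X_sub_C_eq_card (s.map (starRingEnd ℂ))
        rw [Multiset.map_map, Multiset.card_map] at h
        exact h
      have hFm : F.Monic := monic_multiset_prod_of_monic _ _ (fun z _ => monic_X_sub_C z)
      have hFtop : F.coeff m = 1 := by rw [← hFdeg]; exact hFm.coeff_natDegree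
      have hFz : F.coeff (m + 1) = 0 :=
        coeff_eq_zero_of_natDegree_lt (by omega)
      have hGz : G.coeff (m + 1) = 0 :=
        coeff_eq_zero_of_natDegree_lt (by omega)
      intro j hj
      simp only [Multiset.map_cons, Multiset.prod_cons, Multiset.card_cons, ← hm,
        ← hF, ← hG] at hj ⊢
      rcases j with _ | i
      · -- j = 0
        have h0 := IH 0 (Nat.zero_le _)
        rw [Nat.sub_zero, hFtop, mul_one] at h0
        rw [coeff_X_sub_C_mul_zero, coeff_X_sub_C_mul_zero, Nat.sub_zero,
          coeff_X_sub_C_mul_succ, hFtop, hFz]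
        have h1 : -(starRingEnd ℂ) a * G.coeff 0 * (-a * F.coeff 0) =
            a * (starRingEnd ℂ) a * (G.coeff 0 * F.coeff 0) := by ring
        rw [h1, ha, h0]
        ring
      · -- j = i + 1
        have hi : i ≤ m := by omega
        rcases eq_or_lt_of_le hi with heq | hlt
        · -- i = m
          subst heq
          have hmm := IH m le_rfl
          rw [Nat.sub_self, pow_zero, one_mul] at hmm
          rw [coeff_X_sub_C_mul_succ, coeff_X_sub_C_mul_zero, hGz, Nat.sub_self, pow_zero,
            coeff_X_sub_C_mul_zero]
          linear_combination (-a) * hmm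
        · -- i < m
          obtain ⟨d, hd⟩ : ∃ d, m = i + d + 1 := ⟨m - i - 1, by omega⟩
          have ih1 := IH i (by omega)
          have ih2 := IH (i + 1) (by omega)
          have e1 : m - i = d + 1 := by omega
          have e2 : m - (i + 1) = d := by omega
          rw [e1] at ih1
          rw [e2] at ih2
          have e3 : m + 1 - (i + 1) = d + 1 := by omega
          rw [e3, coeff_X_sub_C_mul_succ, coeff_X_sub_C_mul_succ, coeff_X_sub_C_mul_zero]
          linear_combination (-a) * ih1 + (a * (starRingEnd ℂ) a) * ih2 +
            r ^ d * F.coeff d * ha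

/-- If `q` is monic of degree `n ≥ 2`, `α` is a zero of `q`, and every zero `w`
of `q'` satisfies `|w - α| = R` (with `R > 0`), then
`(n-k-1)! · n · R^{2k} · q^{(k+1)}(α) = k! · q'(α) · conj(q^{(n-k)}(α))` for `0 ≤ k ≤ n-1`. -/
theorem stmt_1 (n : ℕ) (hn : 2 ≤ n) (q : Polynomial ℂ) (hq : q.Monic)
    (hdeg : q.natDegree = n) (α : ℂ) (hα : q.eval α = 0) (R : ℝ) (hR : 0 < R)
    (hw : ∀ w : ℂ, (Polynomial.derivative q).eval w = 0 → ‖w - α‖ = R) :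
    ∀ k : ℕ, k ≤ n - 1 →
      ((Nat.factorial (n - k - 1) : ℂ)) * (n : ℂ) * (R : ℂ) ^ (2 * k) *
          (Polynomial.derivative^[k + 1] q).eval α =
        ((Nat.factorial k : ℂ)) * (Polynomial.derivative q).eval α *
          (starRingEnd ℂ) ((Polynomial.derivative^[n - k] q).eval α) := by
  intro k hk
  set p := derivative q with hp
  have hqn : q.coeff n = 1 := by rw [← hdeg]; exact hq.coeff_natDegree
  have hp1 : p.coeff (n - 1) = (n : ℂ) := by
    rw [hp, coeff_derivative, show n - 1 + 1 = n by omega, hqn, one_mul]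
    push_cast [Nat.cast_sub (show 1 ≤ n by omega)]
    ring
  have hnne : (n : ℂ) ≠ 0 := Nat.cast_ne_zero.mpr (by omega)
  have hpdeg : p.natDegree = n - 1 := by
    apply le_antisymm
    · exact hdeg ▸ natDegree_derivative_le q
    · exact le_natDegree_of_ne_zero (by rw [hp1]; exact hnne)
  have hplead : p.leadingCoeff = (n : ℂ) := by
    rw [leadingCoeff, hpdeg, hp1]
  have hpne : p ≠ 0 := fun h => hnne (by rw [← hplead, h, leadingCoeff_zero])
  have hsplits : p.Splits := IsAlgClosed.splits p
  have hfact : p = C (n : ℂ) * (p.roots.map fun z => X - C z).prod := by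
    conv_lhs => rw [hsplits.eq_prod_roots]
    rw [hplead]
  have hcard : Multiset.card p.roots = n - 1 := by
    rw [splits_iff_card_roots.mp hsplits, hpdeg]
  set t : Multiset ℂ := p.roots.map (fun z => z - α) with ht
  have hcardt : Multiset.card t = n - 1 := by rw [ht, Multiset.card_map, hcard]
  have htmem : ∀ w ∈ t, w * (starRingEnd ℂ) w = ((R : ℂ)) ^ 2 := by
    intro w hw'
    rw [ht, Multiset.mem_map] at hw'
    obtain ⟨z, hz, rfl⟩ := hw'
    have hz0 : p.eval z = 0 := (mem_roots'.mp hz).2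
    have habs : ‖z - α‖ = R := hw z hz0
    rw [Complex.mul_conj, ← Complex.sq_norm, habs]
    push_cast
    ring
  set P := taylor α p with hP
  set F := (t.map fun w => X - C w).prod with hFdef
  set G := (t.map fun w => X - C ((starRingEnd ℂ) w)).prod with hGdef
  have hPfact : P = C (n : ℂ) * F := by
    rw [hP, taylor_apply]
    conv_lhs => rw [hfact]
    rw [mul_comp, C_comp, multiset_prod_comp, hFdef, ht, Multiset.map_map, Multiset.map_map]
    congr 2
    apply Multiset.map_congr rfl
    intro z _
    simp only [Function.comp_apply, sub_comp, X_comp, C_comp]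
    rw [map_sub (C : ℂ →+* ℂ[X])]
    ring
  have hconjF : ∀ j, (starRingEnd ℂ) (F.coeff j) = G.coeff j := by
    intro j
    rw [← coeff_map, hFdef, hGdef]
    rw [show Polynomial.map (starRingEnd ℂ) (t.map fun w => X - C w).prod
        = (mapRingHom (starRingEnd ℂ)) (t.map fun w => X - C w).prod from rfl,
      map_multiset_prod, Multiset.map_map]
    have hmm : (Multiset.map (⇑(mapRingHom (starRingEnd ℂ)) ∘ fun w => X - C w) t) =
        Multiset.map (fun w => X - C ((starRingEnd ℂ) w)) t :=
      Multiset.map_congr rfl (fun w _ => by simp)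
    rw [hmm]
  have hcoeff : ∀ j : ℕ, (derivative^[j] p).eval α = (Nat.factorial j : ℂ) * P.coeff j := by
    intro j
    rw [hP, taylor_coeff, ← factorial_smul_hasseDeriv]
    simp only [LinearMap.smul_apply]
    rw [nsmul_eq_mul, eval_mul, eval_natCast]
  have hkey := key ((R : ℂ) ^ 2) t htmem (n - 1 - k) (by omega)
  rw [hcardt, show n - 1 - (n - 1 - k) = k by omega] at hkey
  have e1 : derivative^[k + 1] q = derivative^[k] p := Function.iterate_succ_apply derivative k q
  have e2 : derivative^[n - k] q = derivative^[n - 1 - k] p := by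
    rw [show n - k = (n - 1 - k) + 1 by omega]
    exact Function.iterate_succ_apply derivative (n - 1 - k) q
  have e3 : p.eval α = P.coeff 0 := by
    have := hcoeff 0
    simpa using this
  rw [e1, e2, hcoeff, hcoeff, e3, show n - k - 1 = n - 1 - k by omega]
  rw [map_mul, map_natCast]
  have hc1 : P.coeff k = (n : ℂ) * F.coeff k := by rw [hPfact, coeff_C_mul]
  have hc2 : P.coeff 0 = (n : ℂ) * F.coeff 0 := by rw [hPfact, coeff_C_mul]
  have hc3 : (starRingEnd ℂ) (P.coeff (n - 1 - k)) = (n : ℂ) * G.coeff (n - 1 - k) := by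
    rw [hPfact, coeff_C_mul, map_mul, map_natCast, hconjF]
  rw [hc1, hc2, hc3]
  rw [show (R : ℂ) ^ (2 * k) = ((R : ℂ) ^ 2) ^ k by rw [← pow_mul]]
  linear_combination (-((Nat.factorial k : ℂ)) * ((Nat.factorial (n - 1 - k) : ℂ)) *
    (n : ℂ) * (n : ℂ)) * hkey
end

section
/- For every integer n greater than two, the set {x ∈ [1, n-2] : n^{2x/(n-1)} · (n - x) - n · (x + 1) = 0} equals the singleton {(n-1)/2}. -/
open Real

noncomputable def gfun (N : ℝ) (x : ℝ) : ℝ :=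
  2 * x / (N - 1) * Real.log N + Real.log (N - x) - Real.log N - Real.log (x + 1)

lemma gfun_symm {N : ℝ} (hN : N - 1 ≠ 0) (x : ℝ) :
    gfun N (N - 1 - x) = -gfun N x := by
  have e1 : N - (N - 1 - x) = x + 1 := by ring
  have e2 : N - 1 - x + 1 = N - x := by ring
  simp only [gfun, e1, e2]
  field_simp
  ring

lemma gfun_center {N : ℝ} (hN : N - 1 ≠ 0) : gfun N ((N - 1) / 2) = 0 := by
  have e1 : 2 * ((N - 1) / 2) / (N - 1) = 1 := by field_simp
  have e2 : N - (N - 1) / 2 = (N - 1) / 2 + 1 := by ring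
  simp only [gfun, e1, e2]
  ring

lemma gfun_hasDerivAt {N x : ℝ} (h1 : N - x ≠ 0) (h2 : x + 1 ≠ 0) :
    HasDerivAt (gfun N) (2 / (N - 1) * Real.log N + -(N - x)⁻¹ - (x + 1)⁻¹) x := by
  have hA : HasDerivAt (fun x : ℝ => 2 * x / (N - 1) * Real.log N)
      (2 / (N - 1) * Real.log N) x := by
    simpa using (((hasDerivAt_id x).const_mul 2).div_const (N - 1)).mul_const (Real.log N)
  have h0 : HasDerivAt (fun x : ℝ => N - x) (-1) x := by
    simpa using (hasDerivAt_id' x).const_sub N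
  have hB : HasDerivAt (fun x : ℝ => Real.log (N - x)) (-(N - x)⁻¹) x := by
    have := (Real.hasDerivAt_log h1).comp x h0
    simpa [mul_comm, Function.comp_def] using this
  have h0' : HasDerivAt (fun x : ℝ => x + 1) 1 x := by
    simpa using (hasDerivAt_id x).add_const 1
  have hC : HasDerivAt (fun x : ℝ => Real.log (x + 1)) ((x + 1)⁻¹) x := by
    have := (Real.hasDerivAt_log h2).comp x h0'
    simpa [Function.comp_def] using this
  exact ((hA.add hB).sub_const (Real.log N)).sub hC

noncomputable def g1 (N : ℝ) (x : ℝ) : ℝ :=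
  2 / (N - 1) * Real.log N + -(N - x)⁻¹ - (x + 1)⁻¹

lemma g1_hasDerivAt {N x : ℝ} (h1 : N - x ≠ 0) (h2 : x + 1 ≠ 0) :
    HasDerivAt (g1 N) (((x + 1) ^ 2)⁻¹ - ((N - x) ^ 2)⁻¹) x := by
  have h0 : HasDerivAt (fun x : ℝ => N - x) (-1) x := by
    simpa using (hasDerivAt_id' x).const_sub N
  have hB : HasDerivAt (fun x : ℝ => -(N - x)⁻¹) (-((N - x) ^ 2)⁻¹) x := by
    have h : HasDerivAt (fun x : ℝ => -(N - x)⁻¹) (-(- -1 / (N - x) ^ 2)) x := (h0.inv h1).neg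
    convert h using 1
    ring
  have h0' : HasDerivAt (fun x : ℝ => x + 1) 1 x := by
    simpa using (hasDerivAt_id x).add_const 1
  have hC : HasDerivAt (fun x : ℝ => (x + 1)⁻¹) (-((x + 1) ^ 2)⁻¹) x := by
    have h : HasDerivAt (fun x : ℝ => (x + 1)⁻¹) (-1 / (x + 1) ^ 2) x := h0'.inv h2
    convert h using 1
    ring
  have h := ((hasDerivAt_const x (2 / (N - 1) * Real.log N)).add hB).sub hC
  have e : (0 : ℝ) + -((N - x) ^ 2)⁻¹ - -((x + 1) ^ 2)⁻¹
      = ((x + 1) ^ 2)⁻¹ - ((N - x) ^ 2)⁻¹ := by ring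
  rw [e] at h
  exact h

lemma gfun_strictConvexOn {N : ℝ} (hN : 3 ≤ N) :
    StrictConvexOn ℝ (Set.Icc (1 : ℝ) ((N - 1) / 2)) (gfun N) := by
  set c := (N - 1) / 2 with hc
  have hcN : c < N := by rw [hc]; linarith
  apply strictConvexOn_of_deriv2_pos (convex_Icc _ _)
  · intro y hy
    obtain ⟨hy1, hy2⟩ := hy
    have h1 : N - y ≠ 0 := by
      have : y < N := lt_of_le_of_lt hy2 hcN
      intro h; linarith [sub_eq_zero.mp h]
    have h2 : y + 1 ≠ 0 := by intro h; nlinarith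
    exact (gfun_hasDerivAt h1 h2).continuousAt.continuousWithinAt
  · intro x hx
    rw [interior_Icc] at hx
    obtain ⟨hx1, hx2⟩ := hx
    have hxN : x < N := lt_trans hx2 hcN
    have hx1' : (0 : ℝ) < x + 1 := by linarith
    have hNx : (0 : ℝ) < N - x := by linarith
    -- deriv of gfun agrees with g1 on a neighborhood
    have hev : (deriv (gfun N)) =ᶠ[nhds x] (g1 N) := by
      have hmem : x ∈ Set.Ioo (-1 : ℝ) N := ⟨by linarith, hxN⟩
      filter_upwards [isOpen_Ioo.mem_nhds hmem] with y hy
      have hy1 : N - y ≠ 0 := by have := hy.2; intro h; linarith [sub_eq_zero.mp h]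
      have hy2 : y + 1 ≠ 0 := by have := hy.1; intro h; linarith [eq_neg_of_add_eq_zero_left h]
      exact (gfun_hasDerivAt hy1 hy2).deriv
    have h2deriv : (deriv^[2] (gfun N)) x = ((x + 1) ^ 2)⁻¹ - ((N - x) ^ 2)⁻¹ := by
      have : deriv^[2] (gfun N) x = deriv (deriv (gfun N)) x := by
        simp [Function.iterate_succ, Function.comp]
      rw [this, hev.deriv_eq]
      exact (g1_hasDerivAt hNx.ne' hx1'.ne').deriv
    rw [h2deriv]
    have hlt : (x + 1) ^ 2 < (N - x) ^ 2 := by nlinarith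
    have := inv_strictAnti₀ (by positivity : (0:ℝ) < (x + 1) ^ 2) hlt
    linarith

lemma sq_le_two_pow : ∀ n : ℕ, 4 ≤ n → n ^ 2 ≤ 2 ^ n := by
  intro n hn
  induction n with
  | zero => omega
  | succ m ih =>
    rcases Nat.lt_or_ge m 4 with h | h
    · interval_cases m <;> simp_all
    · have h1 := ih (by omega)
      have h2 : (m + 1) ^ 2 ≤ 2 * m ^ 2 := by nlinarith
      calc (m + 1) ^ 2 ≤ 2 * m ^ 2 := h2
        _ ≤ 2 * 2 ^ m := by omega
        _ = 2 ^ (m + 1) := by ring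

lemma gfun_one_neg {n : ℕ} (hn : 4 ≤ n) : gfun (n : ℝ) 1 < 0 := by
  set N : ℝ := (n : ℝ) with hNdef
  have hN4 : (4 : ℝ) ≤ N := by rw [hNdef]; exact_mod_cast hn
  have hN1 : (0 : ℝ) < N - 1 := by linarith
  have hNpos : (0 : ℝ) < N := by linarith
  set L := Real.log N with hL
  -- Bernoulli: 2 * (N-1)^(n-1) < N^(n-1)
  have hcast1 : ((n - 1 : ℕ) : ℝ) = N - 1 := by
    push_cast [Nat.cast_sub (by omega : 1 ≤ n)]; ring
  have hbern : 2 * (N - 1) ^ (n - 1) < N ^ (n - 1) := by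
    have hs : (1 : ℝ) / (N - 1) ≠ 0 := ne_of_gt (one_div_pos.mpr hN1)
    have hp : (1 : ℝ) < N - 1 := by linarith
    have h := one_add_mul_self_lt_rpow_one_add
      (by linarith [one_div_pos.mpr hN1] : (-1 : ℝ) ≤ 1 / (N - 1)) hs hp
    have e1 : 1 + (N - 1) * (1 / (N - 1)) = 2 := by field_simp; norm_num
    rw [e1] at h
    have e2 : ((1 : ℝ) + 1 / (N - 1)) ^ (N - 1 : ℝ) = (N / (N - 1)) ^ (n - 1 : ℕ) := by
      rw [← hcast1, Real.rpow_natCast]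
      congr 1
      rw [hcast1]
      field_simp
      ring
    rw [e2, div_pow] at h
    have hd : (0 : ℝ) < (N - 1) ^ (n - 1) := by positivity
    rw [lt_div_iff₀ hd] at h
    linarith
  -- n^2 ≤ 2^n in ℝ
  have hP : N ^ 2 ≤ 2 ^ n := by
    have h := sq_le_two_pow n hn
    rw [hNdef]
    exact_mod_cast h
  -- key: ((N-1)/2)^(n-1) < N^(n-3)
  have hkey : ((N - 1) / 2) ^ (n - 1) < N ^ (n - 3) := by
    have hsplit : N ^ (n - 1) = N ^ 2 * N ^ (n - 3) := by
      rw [← pow_add]; congr 1; omega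
    have h2n : (2 : ℝ) ^ n = 2 * 2 ^ (n - 1) := by
      rw [← pow_succ']; congr 1; omega
    have hpow3 : (0 : ℝ) < N ^ (n - 3) := by positivity
    have hstep : N ^ (n - 1) ≤ 2 * 2 ^ (n - 1) * N ^ (n - 3) := by
      calc N ^ (n - 1) = N ^ 2 * N ^ (n - 3) := hsplit
        _ ≤ 2 ^ n * N ^ (n - 3) := by nlinarith
        _ = 2 * 2 ^ (n - 1) * N ^ (n - 3) := by rw [h2n]
    have h2p : (0 : ℝ) < 2 ^ (n - 1) := by positivity
    rw [div_pow]
    rw [div_lt_iff₀ h2p]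
    nlinarith
  -- transfer to rpow
  set b : ℝ := N ^ ((N - 3) / (N - 1) : ℝ) with hb
  have hbpos : 0 < b := Real.rpow_pos_of_pos hNpos _
  have hblt : (N - 1) / 2 < b := by
    by_contra hcon
    push_neg at hcon
    have : b ^ (n - 1) ≤ ((N - 1) / 2) ^ (n - 1) :=
      pow_le_pow_left₀ hbpos.le hcon _
    have hbpow : b ^ (n - 1) = N ^ (n - 3) := by
      rw [hb, ← Real.rpow_natCast (N ^ ((N - 3) / (N - 1) : ℝ)) (n - 1),
        ← Real.rpow_mul hNpos.le, hcast1]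
      have e : (N - 3) / (N - 1) * (N - 1) = N - 3 := by field_simp
      rw [e]
      have hcast3 : ((n - 3 : ℕ) : ℝ) = N - 3 := by
        push_cast [Nat.cast_sub (by omega : 3 ≤ n)]; ring
      rw [← hcast3, Real.rpow_natCast]
    rw [hbpow] at this
    linarith [hkey]
  have hlog : Real.log ((N - 1) / 2) < (N - 3) / (N - 1) * L := by
    have := Real.log_lt_log (by positivity) hblt
    rwa [hb, Real.log_rpow hNpos] at this
  have hlogdiv : Real.log ((N - 1) / 2) = Real.log (N - 1) - Real.log 2 := by
    rw [Real.log_div hN1.ne' (by norm_num)]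
  have hLpos : 0 < L := Real.log_pos (by linarith)
  have e3 : 2 * 1 / (N - 1) * L - L = -((N - 3) / (N - 1) * L) := by
    field_simp
    ring
  simp only [gfun]
  rw [hlogdiv] at hlog
  linarith
  
lemma gfun_neg {n : ℕ} {y : ℝ} (h1 : 1 ≤ y) (h2 : y < ((n : ℝ) - 1) / 2) :
    gfun (n : ℝ) y < 0 := by
  set N : ℝ := (n : ℝ) with hNdef
  have hN3 : (3 : ℝ) < N := by
    have : (1 : ℝ) < (N - 1) / 2 := lt_of_le_of_lt h1 h2
    linarith
  have hn4 : 4 ≤ n := by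
    by_contra h
    push_neg at h
    have : N ≤ 3 := by
      have h3 : n ≤ 3 := by omega
      rw [hNdef]
      exact_mod_cast h3
    linarith
  have hg1 : gfun N 1 < 0 := gfun_one_neg hn4
  rcases eq_or_lt_of_le h1 with rfl | h1'
  · exact hg1
  · -- strict convexity argument
    set c := (N - 1) / 2 with hc
    have hsc := gfun_strictConvexOn (le_of_lt hN3)
    have hmem1 : (1 : ℝ) ∈ Set.Icc (1 : ℝ) c := ⟨le_refl _, by linarith⟩
    have hmemc : c ∈ Set.Icc (1 : ℝ) c := ⟨by linarith, le_refl _⟩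
    have hne : (1 : ℝ) ≠ c := by intro h; rw [← h] at h2; linarith
    have hc1 : (0 : ℝ) < c - 1 := by linarith
    set a := (c - y) / (c - 1) with ha
    set b := (y - 1) / (c - 1) with hbdef
    have hapos : 0 < a := by apply div_pos <;> linarith
    have hbpos : 0 < b := by apply div_pos <;> linarith
    have hab : a + b = 1 := by rw [ha, hbdef]; field_simp; ring
    have hcomb : a • (1 : ℝ) + b • c = y := by
      rw [ha, hbdef, smul_eq_mul, smul_eq_mul]
      field_simp
      ring
    have := hsc.2 hmem1 hmemc hne hapos hbpos hab
    rw [hcomb] at this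
    rw [gfun_center (by intro h; linarith [sub_eq_zero.mp h] : N - 1 ≠ 0)] at this
    have : gfun N y < a * gfun N 1 := by
      simpa [smul_eq_mul] using this
    nlinarith

/-- For every integer `n > 2`, the set
`{x ∈ [1, n-2] : n^{2x/(n-1)} (n - x) - n (x + 1) = 0}` equals `{(n-1)/2}`. -/
theorem stmt_2 (n : ℕ) (hn : 2 < n) :
    {x : ℝ | x ∈ Set.Icc (1 : ℝ) ((n : ℝ) - 2) ∧
        (n : ℝ) ^ (2 * x / ((n : ℝ) - 1)) * ((n : ℝ) - x) - (n : ℝ) * (x + 1) = 0} =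
      {((n : ℝ) - 1) / 2} := by
  set N : ℝ := (n : ℝ) with hNdef
  have hN3 : (3 : ℝ) ≤ N := by rw [hNdef]; exact_mod_cast hn
  have hNpos : (0 : ℝ) < N := by linarith
  have hN1 : N - 1 ≠ 0 := by intro h; nlinarith [sub_eq_zero.mp h]
  ext x
  simp only [Set.mem_setOf_eq, Set.mem_singleton_iff, Set.mem_Icc]
  constructor
  · rintro ⟨⟨hx1, hx2⟩, heq0⟩
    have hNx : (0 : ℝ) < N - x := by linarith
    have hx1p : (0 : ℝ) < x + 1 := by linarith
    have heq : N ^ (2 * x / (N - 1)) * (N - x) = N * (x + 1) := by linarith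
    have hgx : gfun N x = 0 := by
      have hlog := congrArg Real.log heq
      rw [Real.log_mul (Real.rpow_pos_of_pos hNpos _).ne' hNx.ne',
        Real.log_rpow hNpos,
        Real.log_mul hNpos.ne' hx1p.ne'] at hlog
      simp only [gfun]
      linarith
    rcases lt_trichotomy x ((N - 1) / 2) with h | h | h
    · exact absurd hgx (ne_of_lt (gfun_neg hx1 h))
    · exact h
    · exfalso
      set y := N - 1 - x with hy
      have hy1 : 1 ≤ y := by rw [hy]; linarith
      have hy2 : y < (N - 1) / 2 := by rw [hy]; linarith
      have := gfun_neg (n := n) hy1 hy2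
      rw [hy, gfun_symm hN1, hgx] at this
      linarith
  · rintro rfl
    refine ⟨⟨by linarith, by linarith⟩, ?_⟩
    have e1 : 2 * ((N - 1) / 2) / (N - 1) = 1 := by field_simp
    rw [e1, Real.rpow_one]
    ring
end

section
/- If n ≥ 2 and p ∈ S(n,0), then |p|_0 ≤ (1/n)^{1/(n-1)}. -/
open Polynomial Complex

/-- The distance `|p|_α` from `α` to the zero set of `p'`. -/
noncomputable def critDist (p : Polynomial ℂ) (α : ℂ) : ℝ :=
  sInf {r : ℝ | ∃ w : ℂ, (Polynomial.derivative p).eval w = 0 ∧ r = dist α w}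

/-- `S_n`: monic complex polynomials of degree `n` with all zeros in the closed unit disk. -/
def Sset (n : ℕ) : Set (Polynomial ℂ) :=
  {p | p.Monic ∧ p.natDegree = n ∧ ∀ z : ℂ, p.eval z = 0 → ‖z‖ ≤ 1}

lemma prod_map_abs_le_one (s : Multiset ℂ) (h : ∀ z ∈ s, norm z ≤ 1) :
    (s.map norm).prod ≤ 1 := by
  induction s using Multiset.induction with
  | empty => simp
  | cons a s ih =>
    simp only [Multiset.map_cons, Multiset.prod_cons]
    have ha := h a (Multiset.mem_cons_self a s)
    have hs := ih (fun z hz => h z (Multiset.mem_cons_of_mem hz))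
    have hnn : (0:ℝ) ≤ (s.map norm).prod := by
      apply Multiset.prod_nonneg
      intro x hx
      obtain ⟨z, _, rfl⟩ := Multiset.mem_map.mp hx
      exact norm_nonneg z
    nlinarith [norm_nonneg a]

lemma pow_card_le_prod_map_abs (s : Multiset ℂ) (a : ℝ) (ha : 0 ≤ a)
    (h : ∀ z ∈ s, a ≤ norm z) :
    a ^ (Multiset.card s) ≤ (s.map norm).prod := by
  induction s using Multiset.induction with
  | empty => simp
  | cons b s ih =>
    simp only [Multiset.map_cons, Multiset.prod_cons, Multiset.card_cons, pow_succ]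
    have hb := h b (Multiset.mem_cons_self b s)
    have hs := ih (fun z hz => h z (Multiset.mem_cons_of_mem hz))
    have hnn : (0:ℝ) ≤ a ^ Multiset.card s := pow_nonneg ha _
    calc a ^ Multiset.card s * a ≤ (s.map norm).prod * norm b := by
          apply mul_le_mul hs hb ha
          exact le_trans hnn hs
      _ = norm b * (s.map norm).prod := mul_comm _ _

/-- If `n ≥ 2` and `p ∈ S(n,0)` then `|p|₀ ≤ (1/n)^{1/(n-1)}`. -/
theorem stmt_3 (n : ℕ) (hn : 2 ≤ n) (p : Polynomial ℂ) (hp : p ∈ Sset n)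
    (h0 : p.eval 0 = 0) :
    critDist p 0 ≤ ((1 : ℝ) / n) ^ ((1 : ℝ) / ((n : ℝ) - 1)) := by
  obtain ⟨hmon, hdeg, hroots⟩ := hp
  -- p = X * q
  have hXdvd : X ∣ p := X_dvd_iff.mpr (by rwa [coeff_zero_eq_eval_zero])
  obtain ⟨q, hq⟩ := hXdvd
  have hqmon : q.Monic := Monic.of_mul_monic_left monic_X (hq ▸ hmon)
  have hqne : q ≠ 0 := hqmon.ne_zero
  have hqdeg : q.natDegree = n - 1 := by
    have : p.natDegree = 1 + q.natDegree := by
      rw [hq, natDegree_mul X_ne_zero hqne, natDegree_X]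
    omega
  -- |q(0)| ≤ 1
  have hqsplits : Splits q := IsAlgClosed.splits q
  have hq0 : norm (q.eval 0) ≤ 1 := by
    have hqprod := hqsplits.eq_prod_roots_of_monic hqmon
    have : q.eval 0 = ((q.roots.map fun a => (0:ℂ) - a)).prod := by
      conv_lhs => rw [hqprod]
      rw [eval_multiset_prod, Multiset.map_map]
      simp
    rw [this]
    have : norm (((q.roots.map fun a => (0:ℂ) - a)).prod)
        = ((q.roots.map fun a => (0:ℂ) - a).map norm).prod :=
      (map_multiset_prod (normHom : ℂ →*₀ ℝ) _ :)
    rw [this, Multiset.map_map]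
    have : ((q.roots.map fun a => norm ((0:ℂ) - a))).prod
        = ((q.roots.map norm)).prod := by
      congr 1
      apply Multiset.map_congr rfl
      intro a _
      simp
    rw [Function.comp_def, this]
    apply prod_map_abs_le_one
    intro z hz
    apply hroots
    rw [hq]
    have : q.eval z = 0 := (mem_roots hqne).mp hz
    simp [this]
  -- derivative of p
  set p' := derivative p with hp'def
  have hp'coeff : p'.coeff (n - 1) = n := by
    rw [hp'def, coeff_derivative]
    have h1 : n - 1 + 1 = n := by omega
    rw [h1]
    have : p.coeff n = 1 := by
      have := hmon.coeff_natDegree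
      rwa [hdeg] at this
    rw [this, one_mul, Nat.cast_sub (by omega : 1 ≤ n)]
    push_cast
    ring
  have hp'ne : p' ≠ 0 := by
    intro h
    rw [h] at hp'coeff
    simp at hp'coeff
    exact (Nat.cast_ne_zero.mpr (by omega : n ≠ 0)) hp'coeff.symm
  have hp'deg : p'.natDegree = n - 1 := by
    apply natDegree_eq_of_le_of_coeff_ne_zero
    · rw [hp'def]
      exact (natDegree_derivative_le p).trans (by omega)
    · rw [hp'coeff]
      exact_mod_cast (by omega : (0:ℕ) < n).ne'
  have hp'lead : p'.leadingCoeff = n := by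
    rw [leadingCoeff, hp'deg, hp'coeff]
  -- p'(0) = q(0)
  have hp'0 : p'.eval 0 = q.eval 0 := by
    rw [hp'def, hq]
    rw [derivative_mul, derivative_X]
    simp
  -- product formula for p'
  have hp'splits : Splits p' := IsAlgClosed.splits p'
  have hcard : Multiset.card p'.roots = n - 1 := by
    rw [splits_iff_card_roots.mp hp'splits, hp'deg]
  have habs0 : norm (p'.eval 0) = n * ((p'.roots.map norm)).prod := by
    have hprod := hp'splits.eq_prod_roots
    have : p'.eval 0 = p'.leadingCoeff * ((p'.roots.map fun a => (0:ℂ) - a)).prod := by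
      conv_lhs => rw [hprod]
      rw [eval_mul, eval_C, eval_multiset_prod, Multiset.map_map]
      simp
    rw [this, norm_mul, hp'lead]
    have h1 : norm ((n:ℂ)) = n := by
      simp
    rw [h1]
    congr 1
    rw [show ∀ s : Multiset ℂ, ‖s.prod‖ = (s.map norm).prod from fun s => map_multiset_prod (normHom : ℂ →*₀ ℝ) s, Multiset.map_map]
    congr 1
    apply Multiset.map_congr rfl
    intro a _
    simp
  -- pick minimal root
  have hrne : p'.roots ≠ 0 := by
    intro h
    rw [h] at hcard
    simp at hcard
    omega
  have hfne : p'.roots.toFinset.Nonempty := by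
    obtain ⟨x, hx⟩ := Multiset.exists_mem_of_ne_zero hrne
    exact ⟨x, Multiset.mem_toFinset.mpr hx⟩
  obtain ⟨w, hwmem, hwmin⟩ := Finset.exists_min_image p'.roots.toFinset norm hfne
  have hw : w ∈ p'.roots := Multiset.mem_toFinset.mp hwmem
  -- |w|^(n-1) ≤ 1/n
  have hnpos : (0:ℝ) < n := by positivity
  have hkey : norm w ^ (n - 1) ≤ 1 / n := by
    have h1 : norm w ^ (Multiset.card p'.roots) ≤ ((p'.roots.map norm)).prod := by
      apply pow_card_le_prod_map_abs _ _ (norm_nonneg _)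
      intro z hz
      exact hwmin z (Multiset.mem_toFinset.mpr hz)
    rw [hcard] at h1
    have h2 : (n:ℝ) * ((p'.roots.map norm)).prod ≤ 1 := by
      rw [← habs0, hp'0]; exact hq0
    rw [le_div_iff₀ hnpos]
    calc norm w ^ (n-1) * n ≤ ((p'.roots.map norm)).prod * n :=
          mul_le_mul_of_nonneg_right h1 hnpos.le
      _ = n * ((p'.roots.map norm)).prod := mul_comm _ _
      _ ≤ 1 := h2
  -- conclude |w| ≤ (1/n)^(1/(n-1))
  have hm : ((n - 1 : ℕ) : ℝ) = (n:ℝ) - 1 := by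
    push_cast [Nat.cast_sub (by omega : 1 ≤ n)]
    ring
  have hmne : ((n - 1 : ℕ) : ℝ) ≠ 0 := by
    rw [hm]
    have : (2:ℝ) ≤ n := by exact_mod_cast hn
    linarith
  have hwabs : norm w ≤ ((1:ℝ)/n) ^ ((1:ℝ)/((n:ℝ)-1)) := by
    have hx : (0:ℝ) ≤ norm w := norm_nonneg _
    calc norm w
        = (norm w ^ (n-1)) ^ ((1:ℝ)/((n-1:ℕ):ℝ)) := by
          rw [← Real.rpow_natCast (norm w) (n-1), ← Real.rpow_mul hx,
            mul_one_div, div_self hmne, Real.rpow_one]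
      _ ≤ ((1:ℝ)/n) ^ ((1:ℝ)/((n-1:ℕ):ℝ)) := by
          apply Real.rpow_le_rpow (pow_nonneg hx _) hkey
          positivity
      _ = ((1:ℝ)/n) ^ ((1:ℝ)/((n:ℝ)-1)) := by rw [hm]
  -- critDist ≤ |w|
  have hmem : dist (0:ℂ) w ∈ {r : ℝ | ∃ w : ℂ, (derivative p).eval w = 0 ∧ r = dist (0:ℂ) w} := by
    refine ⟨w, ?_, rfl⟩
    exact (mem_roots hp'ne).mp hw
  have hbdd : BddBelow {r : ℝ | ∃ w : ℂ, (derivative p).eval w = 0 ∧ r = dist (0:ℂ) w} := by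
    refine ⟨0, fun r hr => ?_⟩
    obtain ⟨w', _, rfl⟩ := hr
    exact dist_nonneg
  have : critDist p 0 ≤ dist (0:ℂ) w := csInf_le hbdd hmem
  calc critDist p 0 ≤ dist (0:ℂ) w := this
    _ = norm w := by rw [dist_zero_left]
    _ ≤ _ := hwabs
end

section
/- Let n = 2m with m ≥ 1 and let p ∈ S(n,0). Then |p|_0 = (1/n)^{1/(n-1)} if and only if p(z) = z^{2m} + e^{2iθ} z for some θ ∈ ℝ. Consequently the 0-maximal polynomials of even degree n = 2m are exactly the polynomials z^{2m} + e^{2iθ} z, θ ∈ ℝ. -/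
open Polynomial Complex

lemma msprod_le_one (s : Multiset ℝ) (h0 : ∀ x ∈ s, 0 ≤ x) (h1 : ∀ x ∈ s, x ≤ 1) :
    s.prod ≤ 1 := by
  induction s using Multiset.induction with
  | empty => simp
  | cons a s ih =>
    simp only [Multiset.prod_cons]
    have ha0 := h0 a (Multiset.mem_cons_self a s)
    have ha1 := h1 a (Multiset.mem_cons_self a s)
    have hs : s.prod ≤ 1 := ih (fun x hx => h0 x (Multiset.mem_cons_of_mem hx))
      (fun x hx => h1 x (Multiset.mem_cons_of_mem hx))
    have hs0 : 0 ≤ s.prod := Multiset.prod_nonneg (fun x hx => h0 x (Multiset.mem_cons_of_mem hx))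
    nlinarith

/-- Product of reals each `≥ t ≥ 0` is at least `t ^ card`. -/
lemma mspow_le_prod (s : Multiset ℝ) (t : ℝ) (ht : 0 ≤ t) (h : ∀ x ∈ s, t ≤ x) :
    t ^ s.card ≤ s.prod := by
  induction s using Multiset.induction with
  | empty => simp
  | cons a s ih =>
    simp only [Multiset.prod_cons, Multiset.card_cons]
    have ha := h a (Multiset.mem_cons_self a s)
    have hs : t ^ s.card ≤ s.prod := ih (fun x hx => h x (Multiset.mem_cons_of_mem hx))
    have h1 : 0 ≤ t ^ s.card := pow_nonneg ht _
    calc t ^ (s.card + 1) = t * t ^ s.card := by ring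
    _ ≤ a * s.prod := by nlinarith


/-- If all elements are `≥ t > 0` and the product is `≤ t^card`, all elements equal `t`. -/
lemma ms_all_eq (s : Multiset ℝ) (t : ℝ) (ht : 0 < t) (h : ∀ x ∈ s, t ≤ x)
    (hp : s.prod ≤ t ^ s.card) : ∀ x ∈ s, x = t := by
  intro x hx
  by_contra hne
  have hxt : t < x := lt_of_le_of_ne (h x hx) (Ne.symm hne)
  obtain ⟨s', rfl⟩ := Multiset.exists_cons_of_mem hx
  have hs' : t ^ s'.card ≤ s'.prod := mspow_le_prod s' t ht.le
    (fun y hy => h y (Multiset.mem_cons_of_mem hy))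
  have h1 : 0 < t ^ s'.card := pow_pos ht _
  have : t ^ (x ::ₘ s').card < (x ::ₘ s').prod := by
    simp only [Multiset.prod_cons, Multiset.card_cons]
    calc t ^ (s'.card + 1) = t * t ^ s'.card := by ring
    _ < x * s'.prod := by nlinarith
  linarith

/-- If all elements are in `[0,1]` and the product is `≥ 1`, all elements equal `1`. -/
lemma ms_all_eq_one (s : Multiset ℝ) (h0 : ∀ x ∈ s, 0 ≤ x) (h1 : ∀ x ∈ s, x ≤ 1)
    (hp : 1 ≤ s.prod) : ∀ x ∈ s, x = 1 := by
  intro x hx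
  obtain ⟨s', rfl⟩ := Multiset.exists_cons_of_mem hx
  have hs' : s'.prod ≤ 1 := msprod_le_one s' (fun y hy => h0 y (Multiset.mem_cons_of_mem hy))
    (fun y hy => h1 y (Multiset.mem_cons_of_mem hy))
  have hs'0 : 0 ≤ s'.prod := Multiset.prod_nonneg (fun y hy => h0 y (Multiset.mem_cons_of_mem hy))
  have hx0 := h0 x (Multiset.mem_cons_self x s')
  have hx1 := h1 x (Multiset.mem_cons_self x s')
  simp only [Multiset.prod_cons] at hp
  nlinarith

/-- Self-inversive coefficient identity for a polynomial whose roots all lie on the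
circle of radius `ρ`. -/
lemma star_coeff (ρ : ℝ) : ∀ (s : Multiset ℂ), (∀ z ∈ s, ‖z‖ = ρ) →
    ∀ k ≤ s.card,
      (starRingEnd ℂ) ((s.map fun z => X - C z).prod.coeff (s.card - k))
          * (s.map fun z => X - C z).prod.coeff 0
        = (ρ : ℂ) ^ (2 * k) * (s.map fun z => X - C z).prod.coeff k := by
  intro s
  induction s using Multiset.induction with
  | empty =>
    intro _ k hk
    have hk0 : k = 0 := by simpa using hk
    subst hk0
    simp
  | cons a s ih =>
    intro habs k hk
    have hs : ∀ z ∈ s, ‖z‖ = ρ := fun z hz => habs z (Multiset.mem_cons_of_mem hz)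
    have ha : ‖a‖ = ρ := habs a (Multiset.mem_cons_self a s)
    set f : Polynomial ℂ := (s.map fun z => X - C z).prod with hf
    set F : Polynomial ℂ := ((a ::ₘ s).map fun z => X - C z).prod with hF
    have hFf : F = (X - C a) * f := by
      rw [hF, hf, Multiset.map_cons, Multiset.prod_cons]
    have hfmonic : f.Monic := monic_multiset_prod_of_monic _ _ (fun z _ => monic_X_sub_C z)
    have hfdeg : f.natDegree = s.card := natDegree_multiset_prod_X_sub_C_eq_card s
    have hFmonic : F.Monic := monic_multiset_prod_of_monic _ _ (fun z _ => monic_X_sub_C z)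
    have hFdeg : F.natDegree = s.card + 1 := by
      rw [hF]
      simpa using natDegree_multiset_prod_X_sub_C_eq_card (a ::ₘ s)
    have hcard : (a ::ₘ s).card = s.card + 1 := Multiset.card_cons a s
    have hftop : f.coeff s.card = 1 := by
      have := hfmonic.coeff_natDegree
      rwa [hfdeg] at this
    have hFtop : F.coeff (s.card + 1) = 1 := by
      have := hFmonic.coeff_natDegree
      rwa [hFdeg] at this
    -- coefficient recursions
    have hc0 : F.coeff 0 = -a * f.coeff 0 := by
      rw [hFf, mul_coeff_zero]
      simp [coeff_sub]
    have hcsucc : ∀ j, F.coeff (j + 1) = f.coeff j - a * f.coeff (j + 1) := by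
      intro j
      rw [hFf, sub_mul, coeff_sub, coeff_X_mul, coeff_C_mul]
    have hconja : a * (starRingEnd ℂ) a = (ρ : ℂ) ^ 2 := by
      rw [Complex.mul_conj, Complex.normSq_eq_norm_sq, ha]
      push_cast
      ring
    rw [hcard] at hk ⊢
    -- three cases : k = 0, k = s.card + 1, or 1 ≤ k ≤ s.card
    rcases Nat.eq_zero_or_pos k with hk0 | hkpos
    · subst hk0
      simp only [Nat.sub_zero, pow_zero, one_mul, mul_one, hFtop]
      simp
    · rcases eq_or_lt_of_le hk with hktop | hklt
      · -- k = s.card + 1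
        subst hktop
        rw [Nat.sub_self, hFtop, hc0]
        have ihd := ih hs s.card le_rfl
        rw [Nat.sub_self, hftop] at ihd
        calc (starRingEnd ℂ) (-a * f.coeff 0) * (-a * f.coeff 0)
            = (a * (starRingEnd ℂ) a) * ((starRingEnd ℂ) (f.coeff 0) * f.coeff 0) := by
              simp only [map_mul, map_neg]
              ring
          _ = (ρ : ℂ) ^ 2 * ((ρ : ℂ) ^ (2 * s.card) * 1) := by rw [hconja, ihd]
          _ = (ρ : ℂ) ^ (2 * (s.card + 1)) * 1 := by ring
      · -- 1 ≤ k ≤ s.card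
        obtain ⟨j, rfl⟩ : ∃ j, k = j + 1 := ⟨k - 1, by omega⟩
        have hjs : j + 1 ≤ s.card := Nat.lt_succ_iff.mp hklt
        have hsub : s.card + 1 - (j + 1) = (s.card - (j + 1)) + 1 := by omega
        have hsub2 : s.card - (j + 1) + 1 = s.card - j := by omega
        rw [hsub, hcsucc (s.card - (j+1)), hsub2, hc0, hcsucc j]
        have ih1 := ih hs (j + 1) hjs
        have ih2 := ih hs j (le_of_lt hjs)
        simp only [map_sub, map_mul]
        calc ((starRingEnd ℂ) (f.coeff (s.card - (j + 1)))
                - (starRingEnd ℂ) a * (starRingEnd ℂ) (f.coeff (s.card - j))) * (-a * f.coeff 0)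
            = (-a) * ((starRingEnd ℂ) (f.coeff (s.card - (j + 1))) * f.coeff 0)
              + (a * (starRingEnd ℂ) a) * ((starRingEnd ℂ) (f.coeff (s.card - j)) * f.coeff 0) := by
              ring
          _ = (-a) * ((ρ : ℂ) ^ (2 * (j+1)) * f.coeff (j+1))
              + (ρ : ℂ) ^ 2 * ((ρ : ℂ) ^ (2 * j) * f.coeff j) := by rw [ih1, ih2, hconja]
          _ = (ρ : ℂ) ^ (2 * (j + 1)) * (f.coeff j - a * f.coeff (j + 1)) := by ring

noncomputable section Arith

private def Nn (m : ℕ) : ℝ := ((2 * m : ℕ) : ℝ)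
private def dd (m : ℕ) : ℕ := 2 * m - 1
private def Lf (m k : ℕ) : ℝ := (Nn m - k) ^ dd m * Nn m ^ (2 * k)
private def Rf (m k : ℕ) : ℝ := ((k : ℝ) + 1) ^ dd m * Nn m ^ dd m
private def rr (m k : ℕ) : ℝ := Rf m k / Lf m k
private def rho (m k : ℕ) : ℝ :=
  (((k : ℝ) + 2) * (Nn m - k)) ^ dd m /
    ((((k : ℝ) + 1) * (Nn m - k - 1)) ^ dd m * Nn m ^ 2)

private lemma hN {m : ℕ} (hm : 1 ≤ m) : (2 : ℝ) ≤ Nn m := by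
  unfold Nn; exact_mod_cast by omega

private lemma hN0 {m : ℕ} (hm : 1 ≤ m) : (0 : ℝ) < Nn m := lt_of_lt_of_le (by norm_num) (hN hm)

private lemma hNk {m k : ℕ} (hk : k < 2 * m) : (k : ℝ) < Nn m := by
  unfold Nn; exact_mod_cast hk

private lemma Lf_pos {m k : ℕ} (hm : 1 ≤ m) (hk : k ≤ 2 * m - 1) : 0 < Lf m k := by
  have h1 : (k : ℝ) < Nn m := hNk (by omega)
  have h2 := hN0 hm
  unfold Lf
  have : (0:ℝ) < Nn m - k := by linarith
  positivity

private lemma Rf_pos (m k : ℕ) (hm : 1 ≤ m) : 0 < Rf m k := by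
  have h2 := hN0 hm
  unfold Rf
  have : (0:ℝ) < (k:ℝ) + 1 := by positivity
  positivity

private lemma rho_pos {m k : ℕ} (hm : 1 ≤ m) (hk : k + 1 ≤ 2 * m - 1) : 0 < rho m k := by
  have h2 := hN0 hm
  have h1 : ((k:ℕ) : ℝ) + 1 < Nn m := by
    have := hNk (m := m) (k := k + 1) (by omega)
    push_cast at this ⊢
    linarith
  unfold rho
  have e1 : (0:ℝ) < Nn m - k - 1 := by linarith
  have e2 : (0:ℝ) < Nn m - k := by linarith
  positivity

private lemma rr_pos {m k : ℕ} (hm : 1 ≤ m) (hk : k ≤ 2 * m - 1) : 0 < rr m k :=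
  div_pos (Rf_pos m k hm) (Lf_pos hm hk)

private lemma rr_zero (m : ℕ) (hm : 1 ≤ m) : rr m 0 = 1 := by
  unfold rr Rf Lf
  rw [div_eq_one_iff_eq (by have := Lf_pos hm (k := 0) (by omega); unfold Lf at this; exact ne_of_gt this)]
  norm_num

private lemma rr_rec {m k : ℕ} (hm : 1 ≤ m) (hk : k + 1 ≤ 2 * m - 1) :
    rr m (k + 1) = rr m k * rho m k := by
  have h2 := hN0 hm
  have h1 : ((k:ℕ) : ℝ) + 1 < Nn m := by
    have := hNk (m := m) (k := k + 1) (by omega); push_cast at this ⊢; linarith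
  have e1 : (0:ℝ) < Nn m - k - 1 := by linarith
  have e2 : (0:ℝ) < Nn m - k := by linarith
  have e3 : (0:ℝ) < (k:ℝ) + 1 := by positivity
  have e4 : (0:ℝ) < (k:ℝ) + 2 := by positivity
  unfold rr rho Rf Lf
  have hc : ((k + 1 : ℕ) : ℝ) = (k : ℝ) + 1 := by push_cast; ring
  rw [hc]
  have ne1 : (0:ℝ) < (Nn m - (k:ℝ)) ^ dd m := pow_pos e2 _
  have ne2 : (0:ℝ) < ((k:ℝ) + 1) ^ dd m := pow_pos e3 _
  have ne3 : (0:ℝ) < (Nn m - (k:ℝ) - 1) ^ dd m := pow_pos e1 _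
  have ne5 : (0:ℝ) < (Nn m - ((k:ℝ)+1)) ^ dd m := pow_pos (by linarith) _
  rw [div_mul_div_comm]
  rw [div_eq_div_iff (by positivity) (by simp only [mul_pow]; positivity)]
  simp only [mul_pow]
  ring

private lemma rho_dec {m k : ℕ} (hm : 1 ≤ m) (hk : k + 1 ≤ m - 1) :
    rho m (k + 1) < rho m k := by
  have h2 := hN0 hm
  have hm2 : 2 ≤ m := by omega
  have h1 : ((k:ℝ)) + 2 < Nn m - k - 1 := by
    unfold Nn
    have : ((2*k+3 : ℕ) : ℝ) < ((2*m : ℕ) : ℝ) := by exact_mod_cast by omega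
    push_cast at this ⊢
    linarith
  have e3 : (0:ℝ) < Nn m - k - 2 := by linarith
  have e2 : (0:ℝ) < Nn m - k - 1 := by linarith
  have e4 : (0:ℝ) < Nn m - k := by linarith
  have hd1 : dd m ≠ 0 := by unfold dd; omega
  have hk2 : (0:ℝ) < (k:ℝ) + 1 := by positivity
  have hk3 : (0:ℝ) < (k:ℝ) + 2 := by positivity
  have hk4 : (0:ℝ) < (k:ℝ) + 3 := by positivity
  have p1 : (0:ℝ) < (((k:ℝ) + 1 + 1) * (Nn m - ((k:ℝ)+1) - 1)) ^ dd m * Nn m ^ 2 :=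
    mul_pos (pow_pos (mul_pos (by linarith) (by linarith)) _) (by positivity)
  have p2 : (0:ℝ) < (((k:ℝ) + 1) * (Nn m - (k:ℝ) - 1)) ^ dd m * Nn m ^ 2 :=
    mul_pos (pow_pos (mul_pos (by linarith) (by linarith)) _) (by positivity)
  have hXY : ((k:ℝ) + 1 + 2) * (Nn m - ((k:ℝ)+1)) * (((k:ℝ) + 1) * (Nn m - k - 1))
      < ((k:ℝ) + 2) * (Nn m - k) * (((k:ℝ) + 1 + 1) * (Nn m - ((k:ℝ)+1) - 1)) := by
    nlinarith [sq_nonneg ((Nn m - k - 1) - ((k:ℝ)+2))]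
  have hX0 : (0:ℝ) ≤ ((k:ℝ) + 1 + 2) * (Nn m - ((k:ℝ)+1)) * (((k:ℝ) + 1) * (Nn m - k - 1)) := by
    have : (0:ℝ) < Nn m - ((k:ℝ)+1) := by linarith
    have h9 : (0:ℝ) < ((k:ℝ) + 1) * (Nn m - k - 1) := mul_pos (by linarith) (by linarith)
    nlinarith
  unfold rho
  push_cast
  rw [div_lt_div_iff₀ p1 p2]
  have hN2 : (0:ℝ) < Nn m ^ 2 := by positivity
  have h := (mul_lt_mul_iff_left₀ hN2).mpr (pow_lt_pow_left₀ hXY hX0 hd1)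
  simp only [mul_pow] at h ⊢
  linear_combination h

private lemma LR_sym {m k : ℕ} (hm : 1 ≤ m) (hk : k ≤ 2*m-1) :
    Lf m (2*m-1-k) * Lf m k = Rf m (2*m-1-k) * Rf m k := by
  set j := 2*m-1-k with hj
  have hjk : j + k + 1 = 2*m := by omega
  have hc : (j:ℝ) + (k:ℝ) + 1 = Nn m := by
    unfold Nn; exact_mod_cast congrArg (Nat.cast : ℕ → ℝ) hjk
  have h1 : Nn m - (j:ℝ) = (k:ℝ) + 1 := by linarith
  have h2 : Nn m - (k:ℝ) = (j:ℝ) + 1 := by linarith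
  have he : 2*j + 2*k = dd m + dd m := by unfold dd; omega
  have hNe : Nn m ^ (2*j) * Nn m ^ (2*k) = Nn m ^ dd m * Nn m ^ dd m := by
    rw [← pow_add, ← pow_add, he]
  calc Lf m j * Lf m k
      = ((k:ℝ)+1) ^ dd m * ((j:ℝ)+1) ^ dd m * (Nn m ^ (2*j) * Nn m ^ (2*k)) := by
        unfold Lf; rw [h1, h2]; ring
    _ = ((k:ℝ)+1) ^ dd m * ((j:ℝ)+1) ^ dd m * (Nn m ^ dd m * Nn m ^ dd m) := by rw [hNe]
    _ = Rf m j * Rf m k := by unfold Rf; ring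

private lemma one_le_prod_aux (f : ℕ → ℝ) :
    ∀ k, (∀ i < k, 1 < f i) → 1 ≤ ∏ i ∈ Finset.range k, f i := by
  intro k
  induction k with
  | zero => simp
  | succ k ih =>
    intro h
    rw [Finset.prod_range_succ]
    have h1 : 1 ≤ ∏ i ∈ Finset.range k, f i := ih (fun i hi => h i (by omega))
    have h2 : 1 < f k := h k (by omega)
    nlinarith

private lemma rho_chain {m : ℕ} (hm : 1 ≤ m) {i : ℕ} (hi1 : rho m i ≤ 1) :
    ∀ k, i < k → k ≤ m-1 → rho m k < 1 := by
  intro k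
  induction k with
  | zero => omega
  | succ k ih =>
    intro hik hk
    have hd : rho m (k+1) < rho m k := rho_dec hm hk
    rcases Nat.lt_succ_iff_lt_or_eq.mp hik with h | h
    · have := ih h (by omega)
      linarith
    · subst h
      linarith

private lemma main_lt {m : ℕ} (hm : 1 ≤ m) {k : ℕ} (hk1 : 1 ≤ k) (hk2 : k ≤ m - 1) :
    1 < rr m k := by
  by_contra hcon
  push_neg at hcon
  have hm2 : 2 ≤ m := by omega
  have hk2m : k ≤ 2*m-1 := by omega
  have hprod : ∀ l, l ≤ 2*m-1 → rr m l = ∏ i ∈ Finset.range l, rho m i := by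
    intro l
    induction l with
    | zero => intro _; simpa using rr_zero m hm
    | succ l ih =>
      intro hl
      rw [Finset.prod_range_succ, ← ih (by omega), rr_rec hm hl]
  obtain ⟨i, hik, hri⟩ : ∃ i < k, rho m i ≤ 1 := by
    by_contra hc
    push_neg at hc
    have := one_le_prod_aux (rho m) k hc
    have hks : 1 ≤ k - 1 + 1 := by omega
    have hksum : k = (k-1) + 1 := by omega
    have h1 : 1 ≤ ∏ i ∈ Finset.range (k-1), rho m i :=
      one_le_prod_aux (rho m) (k-1) (fun i hi => hc i (by omega))
    have h2 : 1 < rho m (k-1) := hc (k-1) (by omega)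
    have : 1 < ∏ i ∈ Finset.range k, rho m i := by
      rw [hksum, Finset.prod_range_succ]
      nlinarith
    rw [← hprod k hk2m] at this
    linarith
  have hchain := rho_chain hm hri
  have hrml : ∀ l, k ≤ l → l ≤ m-1 → rr m l ≤ 1 := by
    intro l
    induction l with
    | zero => omega
    | succ l ih =>
      intro h1 h2
      rcases Nat.lt_or_ge l.succ k with h | h
      · omega
      rcases eq_or_lt_of_le h1 with he | hlt
      · rw [← he]; exact hcon
      · have hkl : k ≤ l := by omega
        have hll : rr m l ≤ 1 := ih hkl (by omega)
        have hrl : rho m l < 1 := hchain l (by omega) (by omega)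
        have hrr := rr_pos hm (k := l) (by omega)
        have hrhopos := rho_pos hm (k := l) (by omega)
        rw [rr_rec hm (by omega : l + 1 ≤ 2*m-1)]
        nlinarith
  have h1 : rr m (m-1) ≤ 1 := hrml (m-1) hk2 le_rfl
  have h2 : rho m (m-1) < 1 := hchain (m-1) (by omega) le_rfl
  have h3 : rr m m = rr m (m-1) * rho m (m-1) := by
    have := rr_rec hm (k := m-1) (by omega)
    rwa [show m-1+1 = m by omega] at this
  have hsym := LR_sym hm (k := m-1) (by omega)
  rw [show 2*m-1-(m-1) = m by omega] at hsym
  have hLm : 0 < Lf m m := Lf_pos hm (by omega)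
  have hLm1 : 0 < Lf m (m-1) := Lf_pos hm (by omega)
  have hprod1 : rr m (m-1) * rr m m = 1 := by
    unfold rr
    rw [div_mul_div_comm, div_eq_one_iff_eq (by positivity)]
    linear_combination -hsym
  have hrr0 : 0 < rr m (m-1) := rr_pos hm (by omega)
  have hrrm : 0 < rr m m := rr_pos hm (by omega)
  nlinarith

private lemma core_ne {m k : ℕ} (hm : 1 ≤ m) (hk1 : 1 ≤ k) (hk2 : k ≤ 2*m-2) :
    Lf m k ≠ Rf m k := by
  have hm2 : 2 ≤ m := by omega
  intro hEq
  rcases Nat.lt_or_ge k m with hkm | hkm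
  · -- k ≤ m - 1
    have := main_lt hm hk1 (by omega : k ≤ m - 1)
    have hL := Lf_pos hm (k := k) (by omega)
    unfold rr at this
    rw [lt_div_iff₀ hL, one_mul] at this
    rw [hEq] at this
    exact lt_irrefl _ this
  · -- m ≤ k ≤ 2m-2 : use symmetry
    set j := 2*m-1-k with hj
    have hj1 : 1 ≤ j := by omega
    have hj2 : j ≤ m - 1 := by omega
    have hsym := LR_sym hm (k := k) (by omega)
    rw [← hj] at hsym
    have := main_lt hm hj1 hj2
    have hLj := Lf_pos hm (k := j) (by omega)
    have hLk := Lf_pos hm (k := k) (by omega)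
    unfold rr at this
    rw [lt_div_iff₀ hLj, one_mul] at this
    -- hsym : Lf j * Lf k = Rf j * Rf k, hEq : Lf k = Rf k
    rw [hEq] at hsym
    have hRk : 0 < Rf m k := Rf_pos m k hm
    have : Lf m j = Rf m j := by
      have := mul_right_cancel₀ (ne_of_gt hRk) hsym
      exact this
    linarith [this]

end Arith


-- roots card over ℂ
lemma card_roots_eq (f : Polynomial ℂ) (hf : f ≠ 0) : Multiset.card f.roots = f.natDegree := by
  have := (Polynomial.splits_iff_card_roots (f := f)).mp (IsAlgClosed.splits f)
  exact this

lemma monic_eq_prod (f : Polynomial ℂ) (hf : f.Monic) :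
    f = (f.roots.map fun a => X - C a).prod :=
  (IsAlgClosed.splits f).eq_prod_roots_of_monic hf

lemma abs_eval_zero (f : Polynomial ℂ) (hf : f.Monic) :
    ‖(f.eval 0)‖ = (f.roots.map norm).prod := by
  conv_lhs => rw [monic_eq_prod f hf]
  rw [Polynomial.eval_multiset_prod, Multiset.map_map, ← normHom_apply, map_multiset_prod (normHom (α := ℂ)),
    Multiset.map_map]
  congr 1
  apply Multiset.map_congr rfl
  intro z _
  simp [Function.comp]

-- structure of critDist
lemma critDist_spec (p : Polynomial ℂ) (hd : 0 < (derivative p).degree)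
    (hne : derivative p ≠ 0) :
    (∃ w : ℂ, (derivative p).eval w = 0 ∧ critDist p 0 = ‖w‖) ∧
      (∀ w : ℂ, (derivative p).eval w = 0 → critDist p 0 ≤ ‖w‖) := by
  set T : Set ℝ := {r : ℝ | ∃ w : ℂ, (Polynomial.derivative p).eval w = 0 ∧ r = dist 0 w} with hT
  have hTim : T = (fun w : ℂ => dist 0 w) '' {w : ℂ | (derivative p).IsRoot w} := by
    ext r
    constructor
    · rintro ⟨w, h1, h2⟩; exact ⟨w, h1, h2.symm⟩
    · rintro ⟨w, h1, h2⟩; exact ⟨w, h1, h2.symm⟩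
  have hfin : T.Finite := by
    rw [hTim]; exact (Polynomial.finite_setOf_isRoot hne).image _
  have hne' : T.Nonempty := by
    obtain ⟨w, hw⟩ := Complex.exists_root hd
    exact ⟨dist 0 w, w, hw, rfl⟩
  have hbdd : BddBelow T := hfin.bddBelow
  have hmem : critDist p 0 ∈ T := hne'.csInf_mem hfin
  constructor
  · obtain ⟨w, h1, h2⟩ := hmem
    refine ⟨w, h1, ?_⟩
    rw [h2, dist_comm, Complex.dist_eq, sub_zero]
  · intro w hw
    have : dist 0 w ∈ T := ⟨w, hw, rfl⟩
    have := csInf_le hbdd this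
    rwa [dist_comm, Complex.dist_eq, sub_zero] at this

lemma setup_q {n : ℕ} (hn : 2 ≤ n) {p : Polynomial ℂ} (hp : p ∈ Sset n) (h0 : p.eval 0 = 0) :
    ∃ q : Polynomial ℂ, p = X * q ∧ q.Monic ∧ q.natDegree = n - 1 ∧
      (∀ z : ℂ, q.eval z = 0 → ‖z‖ ≤ 1) := by
  obtain ⟨hmon, hdeg, hz⟩ := hp
  have hX : (X : Polynomial ℂ) ∣ p := by
    rw [Polynomial.X_dvd_iff, Polynomial.coeff_zero_eq_eval_zero]
    exact h0
  obtain ⟨q, hq⟩ := hX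
  have hqm : q.Monic := Polynomial.monic_X.of_mul_monic_left (hq ▸ hmon)
  have hq0 : q ≠ 0 := hqm.ne_zero
  have hqdeg : q.natDegree = n - 1 := by
    have := Polynomial.natDegree_mul (Polynomial.X_ne_zero (R := ℂ)) hq0
    rw [← hq, hdeg, Polynomial.natDegree_X] at this
    omega
  refine ⟨q, hq, hqm, hqdeg, fun z hzq => ?_⟩
  apply hz
  rw [hq, Polynomial.eval_mul, hzq, mul_zero]

lemma deriv_facts {n : ℕ} (hn : 2 ≤ n) {p : Polynomial ℂ} (hmon : p.Monic)
    (hdeg : p.natDegree = n) :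
    derivative p ≠ 0 ∧ (derivative p).natDegree = n - 1 ∧
      (derivative p).leadingCoeff = (n : ℂ) ∧ 0 < (derivative p).degree := by
  have hpos : 0 < p.natDegree := by omega
  have hdd : (derivative p).degree = ((n - 1 : ℕ) : WithBot ℕ) := by
    rw [Polynomial.degree_derivative_eq p hpos, hdeg]
  have hne : derivative p ≠ 0 := by
    intro h
    rw [h, Polynomial.degree_zero] at hdd
    exact (by simp : (⊥ : WithBot ℕ) ≠ ((n-1 : ℕ) : WithBot ℕ)) hdd
  have hnat : (derivative p).natDegree = n - 1 := Polynomial.natDegree_eq_of_degree_eq_some hdd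
  refine ⟨hne, hnat, ?_, ?_⟩
  · rw [Polynomial.leadingCoeff, hnat, Polynomial.coeff_derivative]
    have : p.coeff (n - 1 + 1) = 1 := by
      rw [show n - 1 + 1 = n by omega, ← hdeg]
      exact hmon.coeff_natDegree
    rw [this, one_mul]
    have : ((n - 1 + 1 : ℕ) : ℂ) = (n : ℂ) := by exact_mod_cast congrArg (Nat.cast : ℕ → ℂ) (by omega : n - 1 + 1 = n)
    push_cast at this
    linear_combination this
  · rw [hdd]
    exact_mod_cast Nat.pos_of_ne_zero (by omega)

lemma abs_eval_zero' (f : Polynomial ℂ) :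
    ‖(f.eval 0)‖ = ‖f.leadingCoeff‖ * (f.roots.map norm).prod := by
  conv_lhs => rw [(IsAlgClosed.splits f).eq_prod_roots]
  rw [Polynomial.eval_mul, Polynomial.eval_C, norm_mul]
  congr 1
  rw [Polynomial.eval_multiset_prod, Multiset.map_map, ← normHom_apply, map_multiset_prod (normHom (α := ℂ)),
    Multiset.map_map]
  congr 1
  apply Multiset.map_congr rfl
  intro z _
  simp [Function.comp]

lemma tpow_facts {n : ℕ} (hn : 2 ≤ n) :
    0 < ((1:ℝ)/n) ^ ((1:ℝ)/((n:ℝ)-1)) ∧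
      (((1:ℝ)/n) ^ ((1:ℝ)/((n:ℝ)-1))) ^ (n-1) = 1/n := by
  have hb : (0:ℝ) < 1/n := by
    have : (0:ℝ) < (n:ℝ) := by exact_mod_cast by omega
    positivity
  have hcast : ((n - 1 : ℕ) : ℝ) = (n:ℝ) - 1 := by
    have : ((n - 1 + 1 : ℕ) : ℝ) = (n : ℝ) := by exact_mod_cast congrArg (Nat.cast : ℕ → ℝ) (by omega : n - 1 + 1 = n)
    push_cast at this
    linarith
  have hne : (n:ℝ) - 1 ≠ 0 := by
    have : (2:ℝ) ≤ (n:ℝ) := by exact_mod_cast hn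
    intro h; linarith
  constructor
  · exact Real.rpow_pos_of_pos hb _
  · rw [← Real.rpow_natCast (((1:ℝ)/n) ^ ((1:ℝ)/((n:ℝ)-1))) (n-1), ← Real.rpow_mul hb.le]
    rw [hcast]
    rw [show (1:ℝ)/((n:ℝ)-1) * ((n:ℝ)-1) = 1 from by field_simp]
    exact Real.rpow_one _

lemma eval0_deriv (p : Polynomial ℂ) : (derivative p).eval 0 = p.coeff 1 := by
  rw [← Polynomial.coeff_zero_eq_eval_zero, Polynomial.coeff_derivative]
  simp

/-- The upper bound `critDist p 0 ≤ (1/n)^{1/(n-1)}` for `p ∈ S(n,0)`. -/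
lemma ub {n : ℕ} (hn : 2 ≤ n) {p : Polynomial ℂ} (hp : p ∈ Sset n) (h0 : p.eval 0 = 0) :
    critDist p 0 ≤ ((1:ℝ)/n) ^ ((1:ℝ)/((n:ℝ)-1)) := by
  obtain ⟨ht0, htpow⟩ := tpow_facts hn
  set t : ℝ := ((1:ℝ)/n) ^ ((1:ℝ)/((n:ℝ)-1)) with hts
  obtain ⟨q, hpq, hqm, hqdeg, hqz⟩ := setup_q hn hp h0
  obtain ⟨hPne, hPdeg, hPlead, hPdegpos⟩ := deriv_facts hn hp.1 hp.2.1
  set P := derivative p with hP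
  obtain ⟨⟨w0, hw0, hw0d⟩, hall⟩ := critDist_spec p hPdegpos hPne
  by_contra hcon
  push_neg at hcon
  -- all roots of P have abs > t ; product identity gives contradiction
  have hcard : Multiset.card (P.roots.map norm) = n - 1 := by
    rw [Multiset.card_map, card_roots_eq P hPne, hPdeg]
  have hge : ∀ x ∈ P.roots.map norm, critDist p 0 ≤ x := by
    intro x hx
    obtain ⟨w, hw, rfl⟩ := Multiset.mem_map.mp hx
    exact hall w ((Polynomial.mem_roots hPne).mp hw)
  have hlow : (critDist p 0) ^ (n-1) ≤ (P.roots.map norm).prod := by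
    have := mspow_le_prod (P.roots.map norm) (critDist p 0)
      (le_trans ht0.le hcon.le) hge
    rwa [hcard] at this
  -- product of abs of roots of P equals |p.coeff 1| / n
  have habs : ‖(P.eval 0)‖ = (n:ℝ) * (P.roots.map norm).prod := by
    rw [abs_eval_zero' P, hPlead]
    congr 1
    simp
  have hcoeff1 : P.eval 0 = q.eval 0 := by
    rw [eval0_deriv, hpq, Polynomial.coeff_X_mul, Polynomial.coeff_zero_eq_eval_zero]
  have hq1 : ‖(q.eval 0)‖ ≤ 1 := by
    rw [abs_eval_zero q hqm]
    apply msprod_le_one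
    · intro x hx
      obtain ⟨z, hz, rfl⟩ := Multiset.mem_map.mp hx
      exact (norm_nonneg z)
    · intro x hx
      obtain ⟨z, hz, rfl⟩ := Multiset.mem_map.mp hx
      exact hqz z ((Polynomial.mem_roots hqm.ne_zero).mp hz)
  have hn0 : (0:ℝ) < (n:ℝ) := by exact_mod_cast by omega
  have hprod_le : (P.roots.map norm).prod ≤ 1 / n := by
    rw [le_div_iff₀ hn0]
    rw [hcoeff1] at habs
    nlinarith
  -- now contradiction: critDist^ (n-1) > t^(n-1) = 1/n ≥ prod ≥ critDist^(n-1)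
  have hlt : t ^ (n-1) < (critDist p 0) ^ (n-1) :=
    pow_lt_pow_left₀ hcon ht0.le (by omega)
  rw [htpow] at hlt
  linarith

lemma pow_eq_pow_eq {x t : ℝ} (hx : 0 ≤ x) (ht : 0 ≤ t) {d : ℕ} (hd : d ≠ 0)
    (h : x ^ d = t ^ d) : x = t := by
  rcases lt_trichotomy x t with hlt | heq | hgt
  · have := pow_lt_pow_left₀ hlt hx hd; linarith
  · exact heq
  · have := pow_lt_pow_left₀ hgt ht hd; linarith

lemma extremal_mem {n : ℕ} (hn : 2 ≤ n) {c : ℂ} (hc : ‖c‖ = 1) :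
    (X^n + C c * X) ∈ Sset n ∧ (X^n + C c * X : Polynomial ℂ).eval 0 = 0 := by
  have hdlt : (C c * X : Polynomial ℂ).degree < (X^n : Polynomial ℂ).degree := by
    apply lt_of_le_of_lt (Polynomial.degree_C_mul_X_le c)
    rw [Polynomial.degree_X_pow]
    exact_mod_cast by omega
  have hmon : (X^n + C c * X : Polynomial ℂ).Monic :=
    (Polynomial.monic_X_pow n).add_of_left hdlt
  have hdeg : (X^n + C c * X : Polynomial ℂ).natDegree = n := by
    have := Polynomial.degree_add_eq_left_of_degree_lt hdlt
    rw [Polynomial.degree_X_pow] at this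
    exact Polynomial.natDegree_eq_of_degree_eq_some this
  refine ⟨⟨hmon, hdeg, ?_⟩, ?_⟩
  · intro z hz
    simp only [Polynomial.eval_add, Polynomial.eval_pow, Polynomial.eval_mul,
      Polynomial.eval_C, Polynomial.eval_X] at hz
    by_cases hz0 : z = 0
    · simp [hz0]
    · have hfac : z * (z^(n-1) + c) = 0 := by
        rw [mul_add, ← pow_succ']
        rw [show n - 1 + 1 = n by omega]
        linear_combination hz
      have h2 : z^(n-1) + c = 0 := by
        rcases mul_eq_zero.mp hfac with h | h
        · exact absurd h hz0
        · exact h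
      have h3 : ‖z‖ ^ (n-1) = 1 := by
        have : z^(n-1) = -c := by linear_combination h2
        calc ‖z‖ ^ (n-1) = ‖(z^(n-1))‖ := (norm_pow z (n-1)).symm
        _ = ‖(-c)‖ := by rw [this]
        _ = 1 := by rw [norm_neg, hc]
      have := pow_eq_pow_eq (norm_nonneg z) (zero_le_one) (by omega : n - 1 ≠ 0)
        (by rw [h3, one_pow])
      rw [this]
  · simp only [Polynomial.eval_add, Polynomial.eval_pow, Polynomial.eval_mul,
      Polynomial.eval_C, Polynomial.eval_X]
    rw [zero_pow (by omega : n ≠ 0)]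
    ring

lemma extremal_critDist {n : ℕ} (hn : 2 ≤ n) {c : ℂ} (hc : ‖c‖ = 1) :
    critDist (X^n + C c * X) 0 = ((1:ℝ)/n) ^ ((1:ℝ)/((n:ℝ)-1)) := by
  obtain ⟨ht0, htpow⟩ := tpow_facts hn
  set t : ℝ := ((1:ℝ)/n) ^ ((1:ℝ)/((n:ℝ)-1)) with hts
  obtain ⟨⟨hmon, hdeg, _⟩, _⟩ := extremal_mem hn hc
  obtain ⟨hPne, hPdeg, hPlead, hPdegpos⟩ := deriv_facts hn hmon hdeg
  have hn0 : (0:ℝ) < (n:ℝ) := by exact_mod_cast by omega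
  have hd0 : n - 1 ≠ 0 := by omega
  -- every critical point has absolute value t
  have hroot_abs : ∀ w : ℂ, (derivative (X^n + C c * X)).eval w = 0 → ‖w‖ = t := by
    intro w hw
    have hder : derivative (X^n + C c * X : Polynomial ℂ) = C (n:ℂ) * X^(n-1) + C c := by
      rw [Polynomial.derivative_add, Polynomial.derivative_X_pow, Polynomial.derivative_C_mul,
        Polynomial.derivative_X, mul_one]
    rw [hder] at hw
    simp only [Polynomial.eval_add, Polynomial.eval_mul, Polynomial.eval_pow,
      Polynomial.eval_C, Polynomial.eval_X] at hw
    have habs : (n:ℝ) * ‖w‖ ^ (n-1) = 1 := by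
      have h1 : (n:ℂ) * w^(n-1) = -c := by linear_combination hw
      have := congrArg norm h1
      rw [norm_mul, norm_neg, hc, norm_pow] at this
      rwa [show ‖((n:ℂ))‖ = (n:ℝ) from by
        rw [Complex.norm_natCast]] at this
    apply pow_eq_pow_eq (norm_nonneg w) ht0.le hd0
    rw [htpow]
    rw [eq_div_iff (ne_of_gt hn0)]
    linarith [habs]
  -- the set is exactly {t}
  have hset : {r : ℝ | ∃ w : ℂ, (derivative (X^n + C c * X)).eval w = 0 ∧ r = dist 0 w} = {t} := by
    ext r
    simp only [Set.mem_setOf_eq, Set.mem_singleton_iff]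
    constructor
    · rintro ⟨w, hw, rfl⟩
      rw [dist_comm, Complex.dist_eq, sub_zero]
      exact hroot_abs w hw
    · rintro rfl
      obtain ⟨w, hw⟩ := Complex.exists_root hPdegpos
      refine ⟨w, hw, ?_⟩
      rw [dist_comm, Complex.dist_eq, sub_zero]
      exact (hroot_abs w hw).symm
  rw [critDist, hset]
  exact csInf_singleton t

lemma eq_case {m n : ℕ} (hm : 1 ≤ m) (hn : n = 2*m) {p : Polynomial ℂ} (hp : p ∈ Sset n)
    (h0 : p.eval 0 = 0)
    (heq : critDist p 0 = ((1:ℝ)/n) ^ ((1:ℝ)/((n:ℝ)-1))) :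
    ∃ c : ℂ, ‖c‖ = 1 ∧ p = X^n + C c * X := by
  have hn2 : 2 ≤ n := by omega
  obtain ⟨ht0, htpow⟩ := tpow_facts hn2
  set t : ℝ := ((1:ℝ)/n) ^ ((1:ℝ)/((n:ℝ)-1)) with hts
  set d : ℕ := n - 1 with hd
  obtain ⟨q, hpq, hqm, hqdeg, hqz⟩ := setup_q hn2 hp h0
  obtain ⟨hPne, hPdeg, hPlead, hPdegpos⟩ := deriv_facts hn2 hp.1 hp.2.1
  set P := derivative p with hP
  have hall : ∀ w : ℂ, P.eval w = 0 → t ≤ ‖w‖ := by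
    intro w hw
    have := (critDist_spec p hPdegpos hPne).2 w hw
    rwa [heq] at this
  have hn0 : (0:ℝ) < (n:ℝ) := by exact_mod_cast by omega
  have hcardW : Multiset.card P.roots = d := by rw [card_roots_eq P hPne, hPdeg]
  have hcardQ : Multiset.card q.roots = d := by rw [card_roots_eq q hqm.ne_zero, hqdeg]
  -- product identities
  have habs : ‖(P.eval 0)‖ = (n:ℝ) * (P.roots.map norm).prod := by
    rw [abs_eval_zero' P, hPlead]
    congr 1
    simp
  have hcoeff1 : P.eval 0 = q.eval 0 := by
    rw [hP, eval0_deriv, hpq, Polynomial.coeff_X_mul, Polynomial.coeff_zero_eq_eval_zero]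
  have hq1 : ‖(q.eval 0)‖ ≤ 1 := by
    rw [abs_eval_zero q hqm]
    apply msprod_le_one
    · intro x hx
      obtain ⟨z, hz, rfl⟩ := Multiset.mem_map.mp hx
      exact norm_nonneg z
    · intro x hx
      obtain ⟨z, hz, rfl⟩ := Multiset.mem_map.mp hx
      exact hqz z ((Polynomial.mem_roots hqm.ne_zero).mp hz)
  have hgeW : ∀ x ∈ P.roots.map norm, t ≤ x := by
    intro x hx
    obtain ⟨w, hw, rfl⟩ := Multiset.mem_map.mp hx
    exact hall w ((Polynomial.mem_roots hPne).mp hw)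
  have hlow : t ^ d ≤ (P.roots.map norm).prod := by
    have := mspow_le_prod (P.roots.map norm) t ht0.le hgeW
    rwa [Multiset.card_map, hcardW] at this
  have hntd : (n:ℝ) * t ^ d = 1 := by
    rw [htpow]
    field_simp
  have hq01 : ‖(q.eval 0)‖ = 1 := by
    rw [hcoeff1] at habs
    nlinarith
  have hprodW : (P.roots.map norm).prod ≤ t ^ d := by
    rw [hcoeff1, hq01] at habs
    nlinarith
  have hWt : ∀ w ∈ P.roots, ‖w‖ = t := by
    intro w hw
    have := ms_all_eq (P.roots.map norm) t ht0 hgeW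
      (by rwa [Multiset.card_map, hcardW]) (‖w‖) (Multiset.mem_map_of_mem _ hw)
    exact this
  have hQ1 : ∀ z ∈ q.roots, ‖z‖ = 1 := by
    intro z hz
    refine ms_all_eq_one (q.roots.map norm) ?_ ?_ ?_ (‖z‖)
      (Multiset.mem_map_of_mem _ hz)
    · intro x hx
      obtain ⟨y, hy, rfl⟩ := Multiset.mem_map.mp hx
      exact norm_nonneg y
    · intro x hx
      obtain ⟨y, hy, rfl⟩ := Multiset.mem_map.mp hx
      exact hqz y ((Polynomial.mem_roots hqm.ne_zero).mp hy)
    · rw [← abs_eval_zero q hqm, hq01]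
  -- star identities
  have hQ : ∀ k ≤ d, (starRingEnd ℂ) (q.coeff (d - k)) * q.coeff 0 = q.coeff k := by
    intro k hk
    have := star_coeff 1 q.roots hQ1 k (by rwa [hcardQ])
    rw [hcardQ] at this
    rw [← monic_eq_prod q hqm] at this
    simpa using this
  set g : Polynomial ℂ := (P.roots.map fun a => X - C a).prod with hg
  have hPg : P = C (n:ℂ) * g := by
    conv_lhs => rw [(IsAlgClosed.splits P).eq_prod_roots]
    rw [hPlead]
  have hG : ∀ k ≤ d, (starRingEnd ℂ) (g.coeff (d - k)) * g.coeff 0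
      = (t:ℂ) ^ (2*k) * g.coeff k := by
    intro k hk
    have := star_coeff t P.roots hWt k (by rwa [hcardW])
    rwa [hcardW] at this
  -- coefficient relations
  have hng : ∀ j : ℕ, (n:ℂ) * g.coeff j = q.coeff j * ((j:ℂ) + 1) := by
    intro j
    have h1 : P.coeff j = (n:ℂ) * g.coeff j := by
      rw [hPg, Polynomial.coeff_C_mul]
    have h2 : P.coeff j = p.coeff (j+1) * ((j:ℂ) + 1) := by
      rw [hP, Polynomial.coeff_derivative]
    have h3 : p.coeff (j+1) = q.coeff j := by rw [hpq, Polynomial.coeff_X_mul]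
    rw [← h1, h2, h3]
  -- middle coefficients vanish
  have hA : ∀ k, 1 ≤ k → k ≤ d - 1 → q.coeff k = 0 := by
    intro k hk1 hk2
    by_contra hAk
    have hkd : k ≤ d := by omega
    have hGk := hG k hkd
    have hQk := hQ k hkd
    -- multiply hGk by n^2
    have hgk : (n:ℂ)^2 * ((starRingEnd ℂ) (g.coeff (d - k)) * g.coeff 0)
        = ((starRingEnd ℂ) ((n:ℂ) * g.coeff (d-k))) * ((n:ℂ) * g.coeff 0) := by
      rw [map_mul]
      rw [Complex.conj_natCast]
      ring
    have hg0 : (n:ℂ) * g.coeff 0 = q.coeff 0 := by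
      have := hng 0
      simpa using this
    have hgdk : (n:ℂ) * g.coeff (d-k) = q.coeff (d-k) * (((d-k:ℕ):ℂ) + 1) := hng (d-k)
    have hgkk : (n:ℂ) * g.coeff k = q.coeff k * (((k:ℕ):ℂ) + 1) := hng k
    have key : (((d-k:ℕ):ℂ) + 1) * q.coeff k
        = ((k:ℂ) + 1) * (n:ℂ) * (t:ℂ)^(2*k) * q.coeff k := by
      have e1 := congrArg (fun z => (n:ℂ)^2 * z) hGk
      rw [hgk, hg0, hgdk] at e1
      -- e1 : conj(q_{d-k} * (↑(d-k)+1)) * q_0 = n^2 * (t^{2k} * g_k)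
      have e2 : ((n:ℂ))^2 * ((t:ℂ)^(2*k) * g.coeff k) = (t:ℂ)^(2*k) * (n:ℂ) * ((n:ℂ) * g.coeff k) := by
        ring
      rw [e2, hgkk] at e1
      have hconjnat : (starRingEnd ℂ) (((d-k:ℕ):ℂ) + 1) = ((d-k:ℕ):ℂ) + 1 := by
        rw [map_add, Complex.conj_natCast, map_one]
      rw [map_mul, hconjnat] at e1
      calc (((d-k:ℕ):ℂ) + 1) * q.coeff k
          = (((d-k:ℕ):ℂ) + 1) * ((starRingEnd ℂ) (q.coeff (d - k)) * q.coeff 0) := by rw [hQk]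
        _ = (starRingEnd ℂ) (q.coeff (d-k)) * (((d-k:ℕ):ℂ) + 1) * q.coeff 0 := by ring
        _ = (t:ℂ)^(2*k) * (n:ℂ) * (q.coeff k * ((k:ℂ) + 1)) := e1
        _ = ((k:ℂ) + 1) * (n:ℂ) * (t:ℂ)^(2*k) * q.coeff k := by ring
    have hcan : (((d-k:ℕ):ℂ) + 1) = ((k:ℂ) + 1) * (n:ℂ) * (t:ℂ)^(2*k) :=
      mul_right_cancel₀ hAk (by linear_combination key)
    -- turn into a real equation
    have hreal : (((d-k:ℕ):ℝ) + 1) = ((k:ℝ) + 1) * (n:ℝ) * t^(2*k) := by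
      have : ((((d-k:ℕ):ℝ) + 1 : ℝ) : ℂ) = ((((k:ℝ) + 1) * (n:ℝ) * t^(2*k) : ℝ) : ℂ) := by
        push_cast
        push_cast at hcan
        linear_combination hcan
      exact_mod_cast this
    -- raise to the power d
    have hLR : Lf m k = Rf m k := by
      have h5 : (((d-k:ℕ):ℝ) + 1)^d = (((k:ℝ) + 1) * (n:ℝ))^d * (t^d)^(2*k) := by
        rw [hreal]
        rw [mul_pow, mul_pow, ← pow_mul, ← pow_mul]
        ring
      rw [htpow] at h5
      have hnn : Nn m = (n:ℝ) := by unfold Nn; rw [hn]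
      have hdd' : dd m = d := by unfold dd; omega
      have hc1 : ((d-k:ℕ):ℝ) + 1 = (n:ℝ) - (k:ℝ) := by
        have : ((d - k : ℕ):ℝ) = ((n - 1 - k : ℕ):ℝ) := by rw [hd]
        rw [this, Nat.cast_sub (by omega), Nat.cast_sub (by omega)]
        push_cast
        ring
      unfold Lf Rf
      rw [hdd', hnn, ← hc1, h5]
      have hfrac : ((1:ℝ)/n)^(2*k) * (n:ℝ)^(2*k) = 1 := by
        rw [← mul_pow]
        field_simp
        rw [one_pow]
      rw [mul_assoc, hfrac, mul_one, mul_pow]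
    exact core_ne hm hk1 (by omega : k ≤ 2*m-2) hLR
  -- conclude the shape of q
  set c : ℂ := q.coeff 0 with hc
  have habs_c : ‖c‖ = 1 := by
    rw [hc, Polynomial.coeff_zero_eq_eval_zero]
    exact hq01
  have hqq : q = X^d + C c := by
    apply Polynomial.ext
    intro j
    rw [Polynomial.coeff_add, Polynomial.coeff_X_pow, Polynomial.coeff_C]
    rcases Nat.lt_trichotomy j d with hj | hj | hj
    · rcases Nat.eq_zero_or_pos j with hj0 | hjpos
      · subst hj0
        simp only [if_pos rfl]
        rw [if_neg (by omega)]
        simp [hc]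
      · rw [if_neg (by omega), if_neg (by omega), add_zero]
        exact hA j hjpos (by omega)
    · subst hj
      rw [if_pos rfl, if_neg (by omega), add_zero]
      have : q.coeff q.natDegree = 1 := hqm.coeff_natDegree
      rwa [hqdeg] at this
    · rw [if_neg (by omega), if_neg (by omega), add_zero]
      apply Polynomial.coeff_eq_zero_of_natDegree_lt
      rw [hqdeg]
      omega
  refine ⟨c, habs_c, ?_⟩
  rw [hpq, hqq, mul_add, ← pow_succ']
  rw [show d + 1 = n by omega]
  ring


/-- For `n = 2m`, `m ≥ 1`, and `p ∈ S(n,0)`: `|p|₀ = (1/n)^{1/(n-1)}` iff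
`p(z) = z^{2m} + e^{2iθ} z` for some real `θ`; consequently the `0`-maximal polynomials of
even degree `n = 2m` are exactly these polynomials. -/
theorem stmt_4 (m : ℕ) (hm : 1 ≤ m) (n : ℕ) (hn : n = 2 * m)
    (p : Polynomial ℂ) (hp : p ∈ Sset n) (h0 : p.eval 0 = 0) :
    (critDist p 0 = ((1 : ℝ) / n) ^ ((1 : ℝ) / ((n : ℝ) - 1)) ↔
      ∃ θ : ℝ, p = X ^ (2 * m) + C (Complex.exp (2 * θ * Complex.I)) * X) ∧
    ((∀ q ∈ Sset n, q.eval 0 = 0 → critDist q 0 ≤ critDist p 0) ↔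
      ∃ θ : ℝ, p = X ^ (2 * m) + C (Complex.exp (2 * θ * Complex.I)) * X) := by
  have hn2 : 2 ≤ n := by omega
  have habs_exp : ∀ θ : ℝ, ‖(Complex.exp (2 * θ * Complex.I))‖ = 1 := by
    intro θ
    rw [Complex.norm_exp]
    have : ((2:ℂ) * θ * Complex.I).re = 0 := by simp
    rw [this, Real.exp_zero]
  have hfwd : critDist p 0 = ((1 : ℝ) / n) ^ ((1 : ℝ) / ((n : ℝ) - 1)) →
      ∃ θ : ℝ, p = X ^ (2 * m) + C (Complex.exp (2 * θ * Complex.I)) * X := by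
    intro heq
    obtain ⟨c, hc, hpc⟩ := eq_case hm hn hp h0 heq
    refine ⟨Complex.arg c / 2, ?_⟩
    have hexp : Complex.exp (2 * ((Complex.arg c / 2 : ℝ) : ℂ) * Complex.I) = c := by
      have h1 : (2:ℂ) * ((Complex.arg c / 2 : ℝ) : ℂ) = ((Complex.arg c : ℝ) : ℂ) := by
        push_cast; ring
      rw [h1]
      have := Complex.norm_mul_exp_arg_mul_I c
      rw [hc] at this
      simpa using this
    rw [hpc, hn, hexp]
  have hbwd : (∃ θ : ℝ, p = X ^ (2 * m) + C (Complex.exp (2 * θ * Complex.I)) * X) →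
      critDist p 0 = ((1 : ℝ) / n) ^ ((1 : ℝ) / ((n : ℝ) - 1)) := by
    rintro ⟨θ, hpθ⟩
    rw [hpθ, show 2 * m = n from hn.symm]
    exact extremal_critDist hn2 (habs_exp θ)
  refine ⟨⟨hfwd, hbwd⟩, ?_, ?_⟩
  · intro hmax
    apply hfwd
    have h1 : critDist p 0 ≤ ((1 : ℝ) / n) ^ ((1 : ℝ) / ((n : ℝ) - 1)) := ub hn2 hp h0
    obtain ⟨hmem0, heval0⟩ := extremal_mem (n := n) (c := (1:ℂ)) hn2 (by simp)
    have h2 := hmax _ hmem0 heval0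
    rw [extremal_critDist hn2 (by simp : ‖(1:ℂ)‖ = 1)] at h2
    exact le_antisymm h1 h2
  · intro hθ q hq hq0
    rw [hbwd hθ]
    exact ub hn2 hq hq0
end

section
/- Let n ≥ 2, a ∈ ℂ, R > 0, and let p be a complex polynomial of degree n with p(a) = 0 such that every zero w of p' satisfies |w - a| ≥ R. Then max_{z : p(z) = 0} |z - a| ≥ R · n^{1/(n-1)}. Moreover, the constant R · n^{1/(n-1)} is attained, e.g. by p(z) = (z-a)^n + n R^{n-1} (z-a). -/
open Polynomial Complex


private lemma aux_pow_le_prod (m : Multiset ℝ) (R : ℝ) (hR : 0 ≤ R)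
    (h : ∀ x ∈ m, R ≤ x) : R ^ Multiset.card m ≤ m.prod := by
  induction m using Multiset.induction with
  | empty => simp
  | cons a s ih =>
    simp only [Multiset.card_cons, Multiset.prod_cons, pow_succ']
    exact mul_le_mul (h a (Multiset.mem_cons_self a s))
      (ih fun x hx => h x (Multiset.mem_cons_of_mem hx)) (pow_nonneg hR _)
      (hR.trans (h a (Multiset.mem_cons_self a s)))

private lemma aux_prod_le_pow (m : Multiset ℝ) (c : ℝ) (hc : 0 ≤ c)
    (h0 : ∀ x ∈ m, 0 ≤ x) (h : ∀ x ∈ m, x ≤ c) : m.prod ≤ c ^ Multiset.card m := by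
  induction m using Multiset.induction with
  | empty => simp
  | cons a s ih =>
    simp only [Multiset.card_cons, Multiset.prod_cons, pow_succ']
    exact mul_le_mul (h a (Multiset.mem_cons_self a s))
      (ih (fun x hx => h0 x (Multiset.mem_cons_of_mem hx))
        (fun x hx => h x (Multiset.mem_cons_of_mem hx)))
      (Multiset.prod_nonneg fun x hx => h0 x (Multiset.mem_cons_of_mem hx)) hc

private lemma aux_exists_max (m : Multiset ℝ) (hm : m ≠ 0) (h0 : ∀ x ∈ m, 0 ≤ x) :
    ∃ x ∈ m, m.prod ≤ x ^ Multiset.card m := by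
  obtain ⟨x, hx, hmax⟩ := m.toFinset.exists_max_image id
    (by simpa [Multiset.toFinset_nonempty] using hm)
  refine ⟨x, Multiset.mem_toFinset.mp hx, ?_⟩
  exact aux_prod_le_pow m x (h0 x (Multiset.mem_toFinset.mp hx)) h0
    (fun y hy => hmax y (Multiset.mem_toFinset.mpr hy))

private lemma aux_key (n : ℕ) (hn : 2 ≤ n) (R : ℝ) :
    (R * (n : ℝ) ^ ((1 : ℝ) / ((n : ℝ) - 1))) ^ (n - 1) = (n : ℝ) * R ^ (n - 1) := by
  have h2 : (2 : ℝ) ≤ (n : ℝ) := by exact_mod_cast hn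
  have hne : (n : ℝ) - 1 ≠ 0 := by linarith
  have h1 : ((n - 1 : ℕ) : ℝ) = (n : ℝ) - 1 := by
    rw [Nat.cast_sub (by omega)]; norm_num
  rw [mul_pow, ← Real.rpow_natCast ((n : ℝ) ^ ((1 : ℝ) / ((n : ℝ) - 1))) (n - 1),
    ← Real.rpow_mul (by linarith : (0 : ℝ) ≤ (n : ℝ)), h1, one_div,
    inv_mul_cancel₀ hne, Real.rpow_one]
  ring

private lemma aux_eval_abs (p : ℂ[X]) (a : ℂ) :
    ‖p.eval a‖
      = ‖p.leadingCoeff‖ * ((p.roots.map fun z => ‖a - z‖).prod) := by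
  rw [(IsAlgClosed.splits p).eval_eq_prod_roots a, norm_mul]
  have := Multiset.prod_hom (p.roots.map fun x => a - x) (normHom : ℂ →*₀ ℝ)
  rw [Multiset.map_map] at this
  exact congrArg (‖p.leadingCoeff‖ * ·) this.symm


/-- If `p` has degree `n ≥ 2`, `p(a) = 0`, and every zero `w` of `p'` satisfies
`|w - a| ≥ R > 0`, then some zero `z` of `p` satisfies `|z - a| ≥ R·n^{1/(n-1)}`; moreover
the constant is attained by `p(z) = (z-a)^n + n R^{n-1}(z-a)`. -/
theorem stmt_8 (n : ℕ) (hn : 2 ≤ n) (a : ℂ) (R : ℝ) (hR : 0 < R) :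
    (∀ p : Polynomial ℂ, p.natDegree = n → p.eval a = 0 →
      (∀ w : ℂ, (Polynomial.derivative p).eval w = 0 → R ≤ ‖w - a‖) →
      ∃ z : ℂ, p.eval z = 0 ∧
        R * (n : ℝ) ^ ((1 : ℝ) / ((n : ℝ) - 1)) ≤ ‖z - a‖) ∧
    (∀ p : Polynomial ℂ,
      p = (X - C a) ^ n + C ((n : ℂ) * (R : ℂ) ^ (n - 1)) * (X - C a) →
      p.natDegree = n ∧ p.eval a = 0 ∧
      (∀ w : ℂ, (Polynomial.derivative p).eval w = 0 → R ≤ ‖w - a‖) ∧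
      (∀ z : ℂ, p.eval z = 0 →
        ‖z - a‖ ≤ R * (n : ℝ) ^ ((1 : ℝ) / ((n : ℝ) - 1)))) := by
  have h2 : (2 : ℝ) ≤ (n : ℝ) := by exact_mod_cast hn
  set s : ℝ := R * (n : ℝ) ^ ((1 : ℝ) / ((n : ℝ) - 1)) with hs
  have hs0 : 0 ≤ s := by positivity
  have hkey : s ^ (n - 1) = (n : ℝ) * R ^ (n - 1) := aux_key n hn R
  have hn1 : n - 1 ≠ 0 := by omega
  constructor
  · intro p hdeg hpa hroot
    have hp0 : p ≠ 0 := by rintro rfl; simp at hdeg; omega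
    have hda : (derivative p).eval a ≠ 0 := by
      intro h
      have := hroot a h
      simp at this
      linarith
    obtain ⟨q, hq⟩ : (X - C a) ∣ p := dvd_iff_isRoot.mpr hpa
    have hq0 : q ≠ 0 := by rintro rfl; simp at hq; exact hp0 hq
    have hdq : q.natDegree = n - 1 := by
      have h := hdeg
      rw [hq, natDegree_mul (X_sub_C_ne_zero a) hq0, natDegree_X_sub_C] at h
      omega
    have hlcq : q.leadingCoeff = p.leadingCoeff := by
      rw [hq, leadingCoeff_mul, leadingCoeff_X_sub_C, one_mul]
    have heval : (derivative p).eval a = q.eval a := by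
      rw [hq, derivative_mul]
      simp
    have hdp' : (derivative p).natDegree = n - 1 := by
      have hdd := degree_derivative_eq p (by rw [hdeg]; omega)
      rw [hdeg] at hdd
      exact natDegree_eq_of_degree_eq_some hdd
    have hd'0 : derivative p ≠ 0 := by
      rintro h; exact hda (by simp [h])
    have hlcp : 0 < ‖p.leadingCoeff‖ := by
      simpa [AbsoluteValue.pos_iff] using leadingCoeff_ne_zero.mpr hp0
    have hlc' : ‖(derivative p).leadingCoeff‖
        = (n : ℝ) * ‖p.leadingCoeff‖ := by
      have hcast : ((n - 1 : ℕ) : ℂ) + 1 = (n : ℂ) := by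
        rw [Nat.cast_sub (by omega)]; ring
      unfold Polynomial.leadingCoeff
      rw [hdp', coeff_derivative, Nat.sub_add_cancel (by omega), hcast,
        norm_mul, Complex.norm_natCast, hdeg, mul_comm]
    have hcard' : Multiset.card (derivative p).roots = n - 1 := by
      rw [splits_iff_card_roots.mp (IsAlgClosed.splits _), hdp']
    have hcardq : Multiset.card q.roots = n - 1 := by
      rw [splits_iff_card_roots.mp (IsAlgClosed.splits _), hdq]
    -- lower bound on |p'(a)|
    have hlow : (n : ℝ) * ‖p.leadingCoeff‖ * R ^ (n - 1)
        ≤ ‖(derivative p).eval a‖ := by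
      rw [aux_eval_abs (derivative p) a, hlc']
      have hprod : R ^ (n - 1) ≤ ((derivative p).roots.map fun z => ‖a - z‖).prod := by
        have := aux_pow_le_prod ((derivative p).roots.map fun z => ‖a - z‖) R hR.le
          (by
            intro x hx
            obtain ⟨w, hw, rfl⟩ := Multiset.mem_map.mp hx
            have hwr : (derivative p).eval w = 0 := (mem_roots hd'0).mp hw
            have := hroot w hwr
            rwa [norm_sub_rev] at this)
        rwa [Multiset.card_map, hcard'] at this
      calc (n : ℝ) * ‖p.leadingCoeff‖ * R ^ (n - 1)
          ≤ (n : ℝ) * ‖p.leadingCoeff‖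
            * ((derivative p).roots.map fun z => ‖a - z‖).prod := by
            apply mul_le_mul_of_nonneg_left hprod; positivity
        _ = _ := by ring
    -- upper side : |p'(a)| = |q(a)| = |lc| * prod over roots of q
    have hup : ‖(derivative p).eval a‖
        = ‖p.leadingCoeff‖ * ((q.roots.map fun z => ‖a - z‖).prod) := by
      rw [heval, aux_eval_abs q a, hlcq]
    have hprodq : (n : ℝ) * R ^ (n - 1) ≤ (q.roots.map fun z => ‖a - z‖).prod := by
      have h := hlow
      rw [hup] at h
      have := (mul_le_mul_iff_right₀ hlcp).mp (by linarith : ‖p.leadingCoeff‖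
        * ((n : ℝ) * R ^ (n - 1)) ≤ ‖p.leadingCoeff‖
        * ((q.roots.map fun z => ‖a - z‖).prod))
      linarith
    have hmne : (q.roots.map fun z => ‖a - z‖) ≠ 0 := by
      intro h
      have := congrArg Multiset.card h
      rw [Multiset.card_map, hcardq] at this
      simp at this
      omega
    obtain ⟨x, hx, hxle⟩ := aux_exists_max (q.roots.map fun z => ‖a - z‖) hmne
      (by
        intro x hx
        obtain ⟨w, _, rfl⟩ := Multiset.mem_map.mp hx
        exact norm_nonneg _)
    obtain ⟨z, hz, rfl⟩ := Multiset.mem_map.mp hx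
    rw [Multiset.card_map, hcardq] at hxle
    refine ⟨z, ?_, ?_⟩
    · have hzq : q.eval z = 0 := (mem_roots hq0).mp hz
      rw [hq, eval_mul, hzq, mul_zero]
    · have hpow : s ^ (n - 1) ≤ ‖a - z‖ ^ (n - 1) := by
        rw [hkey]; exact hprodq.trans hxle
      have := (pow_le_pow_iff_left₀ hs0 (norm_nonneg _) hn1).mp hpow
      rwa [norm_sub_rev] at this
  · intro p hp
    subst hp
    set c : ℂ := (n : ℂ) * (R : ℂ) ^ (n - 1) with hc
    have hnc : (n : ℂ) ≠ 0 := by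
      simp only [ne_eq, Nat.cast_eq_zero]; omega
    have habsc : ‖c‖ = (n : ℝ) * R ^ (n - 1) := by
      rw [hc, norm_mul, Complex.norm_natCast, norm_pow, Complex.norm_real, Real.norm_eq_abs, abs_of_pos hR]
    have hdeg : ((X - C a) ^ n + C c * (X - C a)).natDegree = n := by
      have hd1 : degree (C c * (X - C a)) < degree ((X - C a) ^ n) := by
        calc degree (C c * (X - C a)) ≤ 0 + 1 := by
              apply (degree_mul_le _ _).trans
              exact add_le_add degree_C_le (degree_X_sub_C a).le
          _ < (n : WithBot ℕ) := by
              rw [zero_add]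
              exact_mod_cast by omega
          _ = degree ((X - C a) ^ n) := by
              rw [degree_pow, degree_X_sub_C]; simp
      have := degree_add_eq_left_of_degree_lt hd1
      rw [degree_pow, degree_X_sub_C] at this
      apply natDegree_eq_of_degree_eq_some
      rw [this]; simp
    have hder : derivative ((X - C a) ^ n + C c * (X - C a))
        = C (n : ℂ) * (X - C a) ^ (n - 1) + C c := by
      rw [derivative_add, derivative_pow, derivative_mul]
      simp
    refine ⟨hdeg, by simp; omega, ?_, ?_⟩
    · intro w hw
      rw [hder] at hw
      simp only [eval_add, eval_mul, eval_pow, eval_sub, eval_X, eval_C] at hw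
      have hw' : (w - a) ^ (n - 1) = -(R : ℂ) ^ (n - 1) := by
        have : (n : ℂ) * ((w - a) ^ (n - 1) + (R : ℂ) ^ (n - 1)) = 0 := by
          rw [hc] at hw; ring_nf; ring_nf at hw; linear_combination hw
        have := (mul_eq_zero.mp this).resolve_left hnc
        exact eq_neg_of_add_eq_zero_left this
      have habs : ‖w - a‖ ^ (n - 1) = R ^ (n - 1) := by
        have := congrArg (‖·‖) hw'
        rwa [norm_pow, norm_neg, norm_pow, Complex.norm_real, Real.norm_eq_abs, abs_of_pos hR] at this
      exact (pow_le_pow_iff_left₀ hR.le (norm_nonneg _) hn1).mp habs.ge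
    · intro z hz
      simp only [eval_add, eval_mul, eval_pow, eval_sub, eval_X, eval_C] at hz
      have hfact : (z - a) * ((z - a) ^ (n - 1) + c) = 0 := by
        have hpow : (z - a) ^ n = (z - a) ^ (n - 1) * (z - a) := by
          rw [← pow_succ, Nat.sub_add_cancel (by omega)]
        rw [mul_add, mul_comm, ← hpow]
        linear_combination hz
      rcases mul_eq_zero.mp hfact with h | h
      · rw [h]; simpa using hs0
      · have hz' : (z - a) ^ (n - 1) = -c := eq_neg_of_add_eq_zero_left h
        have habs : ‖z - a‖ ^ (n - 1) = s ^ (n - 1) := by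
          have := congrArg (‖·‖) hz'
          rw [norm_pow, norm_neg, habsc] at this
          rw [this, hkey]
        exact (pow_le_pow_iff_left₀ (norm_nonneg _) hs0 hn1).mp habs.le
end

section
/- Let M be a complex m×n matrix and let x range over vectors in ℂ^n. The system Re(Mx) > 0 (i.e., there exists x ∈ ℂ^n such that the real part of every coordinate of Mx is strictly positive) is solvable if and only if M is not positively singular. -/
/-- A complex `m × n` matrix `M` is positively singular if there exist nonnegative reals
`μ₁, …, μ_m`, not all zero, with `∑ᵢ μᵢ mᵢⱼ = 0` for every `j`. -/
def PositivelySingular {m n : ℕ} (M : Matrix (Fin m) (Fin n) ℂ) : Prop :=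
  ∃ μ : Fin m → ℝ, (∀ i, 0 ≤ μ i) ∧ (∃ i, μ i ≠ 0) ∧
    ∀ j, ∑ i, (μ i : ℂ) * M i j = 0

/-- The system `Re(Mx) > 0` is solvable iff `M` is not positively singular. -/
theorem stmt_9 (m n : ℕ) (M : Matrix (Fin m) (Fin n) ℂ) :
    (∃ x : Fin n → ℂ, ∀ i, 0 < (∑ j, M i j * x j).re) ↔ ¬ PositivelySingular M := by
  constructor
  · rintro ⟨x, hx⟩ ⟨μ, hμ0, ⟨i0, hi0⟩, hsum⟩
    have key : ∑ i, μ i * (∑ j, M i j * x j).re = 0 := by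
      have : (∑ i, (μ i : ℂ) * ∑ j, M i j * x j) = 0 := by
        calc (∑ i, (μ i : ℂ) * ∑ j, M i j * x j)
            = ∑ j, (∑ i, (μ i : ℂ) * M i j) * x j := by
              simp only [Finset.mul_sum, Finset.sum_mul, mul_assoc]
              rw [Finset.sum_comm]
          _ = 0 := by simp [hsum]
      have := congrArg Complex.re this
      simpa [Complex.re_sum] using this
    have pos : 0 < ∑ i, μ i * (∑ j, M i j * x j).re := by
      have h1 : ∀ i ∈ Finset.univ, (0:ℝ) ≤ μ i * (∑ j, M i j * x j).re :=
        fun i _ => mul_nonneg (hμ0 i) (hx i).le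
      have h2 : 0 < μ i0 * (∑ j, M i0 j * x j).re :=
        mul_pos (lt_of_le_of_ne (hμ0 i0) (Ne.symm hi0)) (hx i0)
      exact Finset.sum_pos' h1 ⟨i0, Finset.mem_univ _, h2⟩
    rw [key] at pos
    exact lt_irrefl _ pos
  · intro hns
    set E := EuclideanSpace ℝ (Fin n × Bool) with hE
    set a : Fin m → E := fun i => WithLp.toLp 2 (fun p : Fin n × Bool => if p.2 then -(M i p.1).im else (M i p.1).re) with ha
    have h0 : (0 : E) ∉ convexHull ℝ (Set.range a) := by
      intro h0
      rw [convexHull_range_eq_exists_affineCombination] at h0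
      obtain ⟨s, w, hw0, hw1, hwa⟩ := h0
      rw [Finset.affineCombination_eq_linear_combination s a w hw1] at hwa
      set μ : Fin m → ℝ := fun i => if i ∈ s then w i else 0 with hμ
      have hcomb : ∑ i, μ i • a i = (0 : E) := by
        rw [← hwa]
        rw [← Finset.sum_subset (Finset.subset_univ s)]
        · exact Finset.sum_congr rfl (fun i hi => by simp [hμ, hi])
        · intro i _ hi
          simp [hμ, hi]
      apply hns
      refine ⟨μ, fun i => ?_, ?_, fun j => ?_⟩
      · by_cases hi : i ∈ s
        · simpa [hμ, hi] using hw0 i hi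
        · simp [hμ, hi]
      · have : ∑ i, μ i = 1 := by
          rw [← hw1, ← Finset.sum_subset (Finset.subset_univ s)]
          · exact Finset.sum_congr rfl (fun i hi => by simp [hμ, hi])
          · intro i _ hi; simp [hμ, hi]
        by_contra hall
        push_neg at hall
        simp [hall] at this
      · have hs : ∀ p : Fin n × Bool, (∑ i, μ i • a i) p = ∑ i, μ i * a i p :=
          fun p => by rw [WithLp.ofLp_sum, Finset.sum_apply]; rfl
        have hz : ∀ p : Fin n × Bool, (0 : E) p = 0 := fun _ => rfl
        have hre' : ∑ i, μ i * (M i j).re = 0 := by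
          have := ((hs (j, false)).symm.trans (congrFun (congrArg WithLp.ofLp hcomb) (j, false))).trans (hz (j, false))
          simpa [ha] using this
        have him' : ∑ i, μ i * (M i j).im = 0 := by
          have := ((hs (j, true)).symm.trans (congrFun (congrArg WithLp.ofLp hcomb) (j, true))).trans (hz (j, true))
          simpa [ha, mul_neg, Finset.sum_neg_distrib, neg_eq_zero, Pi.zero_apply, PiLp.zero_apply] using this
        apply Complex.ext
        · simpa [Complex.re_sum] using hre'
        · simpa [Complex.im_sum] using him'
    have hconv : Convex ℝ (convexHull ℝ (Set.range a)) := convex_convexHull ℝ _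
    have hclosed : IsClosed (convexHull ℝ (Set.range a)) :=
      (Set.finite_range a).isClosed_convexHull ℝ
    obtain ⟨f, u, hfu, hub⟩ := geometric_hahn_banach_point_closed hconv hclosed h0
    have hu : 0 < u := by simpa using hfu
    set x : Fin n → ℂ := fun j =>
      ⟨f (EuclideanSpace.single (j, false) 1), f (EuclideanSpace.single (j, true) 1)⟩ with hx
    refine ⟨x, fun i => ?_⟩
    have hai : a i = ∑ p : Fin n × Bool, a i p • EuclideanSpace.single p (1:ℝ) := by
      ext q
      rw [WithLp.ofLp_sum, Finset.sum_apply]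
      simp only [PiLp.smul_apply, EuclideanSpace.single_apply, smul_eq_mul, mul_ite, mul_one,
        mul_zero]
      simp
    have hfa : f (a i) = ∑ p : Fin n × Bool, a i p * f (EuclideanSpace.single p (1:ℝ)) := by
      conv_lhs => rw [hai]
      rw [map_sum]
      simp [smul_eq_mul]
    have heq : (∑ j, M i j * x j).re = f (a i) := by
      rw [hfa, Complex.re_sum, Fintype.sum_prod_type]
      refine Finset.sum_congr rfl (fun j _ => ?_)
      rw [Fintype.sum_bool]
      simp [ha, hx, Complex.mul_re]
      ring
    rw [heq]
    exact lt_trans hu (hub _ (subset_convexHull ℝ _ ⟨i, rfl⟩))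
end

section
/- Let p be a complex polynomial of degree n ≥ 2 such that both p and its derivative p' have only simple zeros. Write the zeros of p as z_1,…,z_n and the zeros of p' as w_1,…,w_{n-1}, and define the (n-1)×(n-1) matrix B(p) with entries (z_i - w_j)^{-2} for 1 ≤ i, j ≤ n-1 (note z_i ≠ w_j since p has simple zeros). Then det(B(p)) ≠ 0. -/
open Polynomial Complex

private lemma roots_ge {k : ℕ} (q : Polynomial ℂ) (hq : q ≠ 0) (w : Fin k → ℂ)
    (hwinj : Function.Injective w) (hw : ∀ j, q.eval (w j) = 0) :
    Multiset.map w Finset.univ.val ≤ q.roots := by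
  have hnd : (Multiset.map w Finset.univ.val).Nodup :=
    Multiset.Nodup.map hwinj Finset.univ.nodup
  rw [Multiset.le_iff_subset hnd]
  intro x hx
  obtain ⟨j, _, rfl⟩ := Multiset.mem_map.mp hx
  exact (mem_roots hq).mpr (hw j)

private lemma card_le_of_roots {k : ℕ} (q : Polynomial ℂ) (hq : q ≠ 0) (w : Fin k → ℂ)
    (hwinj : Function.Injective w) (hw : ∀ j, q.eval (w j) = 0) :
    k ≤ q.natDegree := by
  have h1 := roots_ge q hq w hwinj hw
  have h2 := Multiset.card_le_card h1
  simpa using h2.trans (card_roots' q)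

/-- Let `p` have degree `n ≥ 2` with `p` and `p'` having only simple zeros,
zeros of `p` being `z₁, …, z_n` and zeros of `p'` being `w₁, …, w_{n-1}` (here recorded by
injective enumerations exhausting all roots). Then the `(n-1) × (n-1)` matrix
`B(p) = ((z_i - w_j)⁻²)` has nonzero determinant. -/
theorem stmt_10 (n : ℕ) (hn : 2 ≤ n) (p : Polynomial ℂ) (hdeg : p.natDegree = n)
    (z : Fin n → ℂ) (hzinj : Function.Injective z) (hz : ∀ i, p.eval (z i) = 0)
    (w : Fin (n - 1) → ℂ) (hwinj : Function.Injective w)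
    (hw : ∀ j, (Polynomial.derivative p).eval (w j) = 0) :
    Matrix.det
      (Matrix.of fun i j : Fin (n - 1) =>
        ((z (Fin.castLE (Nat.sub_le n 1) i) - w j) ^ 2)⁻¹) ≠ 0 := by
  obtain ⟨m, rfl⟩ : ∃ m, n = m + 2 := ⟨n - 2, by omega⟩
  intro hdet
  -- basic facts about p
  have hp0 : p ≠ 0 := fun h => by simp [h] at hdeg
  have hlead : p.leadingCoeff ≠ 0 := leadingCoeff_ne_zero.mpr hp0
  -- the roots of p are exactly the z i
  have hroots : p.roots = Multiset.map z Finset.univ.val := by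
    symm
    apply Multiset.eq_of_le_of_card_le (roots_ge p hp0 z hzinj hz)
    have := card_roots' p
    simpa [hdeg] using this
  have hfac : p = C p.leadingCoeff * ∏ i, (X - C (z i)) := by
    have hsp : Splits p := IsAlgClosed.splits p
    have h := hsp.eq_prod_roots
    rw [hroots] at h
    conv_lhs => rw [h]
    congr 1
    rw [Multiset.map_map]
    rfl
  -- simple roots: derivative of p is nonzero at roots of p
  have hpder : Polynomial.derivative p ≠ 0 := by
    intro h
    have := Polynomial.natDegree_eq_zero_of_derivative_eq_zero h
    omega
  have hsimple : ∀ x, p.eval x = 0 → (Polynomial.derivative p).eval x ≠ 0 := by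
    intro x hx hdx
    have hxr : x ∈ p.roots := (mem_roots hp0).mpr hx
    have hcount : Multiset.count x p.roots = 1 := by
      rw [hroots]
      exact Multiset.count_eq_one_of_mem (Multiset.Nodup.map hzinj Finset.univ.nodup)
        (hroots ▸ hxr)
    have hmul1 : rootMultiplicity x p = 1 := by rw [← count_roots]; exact hcount
    have : rootMultiplicity x (Polynomial.derivative p) = 0 := by
      rw [derivative_rootMultiplicity_of_root hx, hmul1]
    have hne := (rootMultiplicity_eq_zero_iff.mp this) hdx
    exact hpder hne
  -- w j is never a root of p
  have hpw : ∀ j, p.eval (w j) ≠ 0 := fun j h => hsimple (w j) h (hw j)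
  -- abbreviations
  set ζ : Fin (m + 1) → ℂ := fun i => z (Fin.castLE (Nat.sub_le (m + 2) 1) i) with hζdef
  have hζinj : Function.Injective ζ := fun a b h => Fin.castLE_injective _ (hzinj h)
  have hζw : ∀ i j, ζ i - w j ≠ 0 := by
    intro i j h
    have : ζ i = w j := by linear_combination h
    exact hsimple (ζ i) (hz _) (this ▸ hw j)
  -- extract a null vector
  obtain ⟨c, hc0, hc⟩ : ∃ c : Fin (m + 1) → ℂ, c ≠ 0 ∧
      ∀ j, ∑ i, ((ζ i - w j) ^ 2)⁻¹ * c i = 0 := by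
    have hdT : Matrix.det (Matrix.transpose
        (Matrix.of fun i j : Fin (m + 1) => ((ζ i - w j) ^ 2)⁻¹)) = 0 := by
      rw [Matrix.det_transpose]
      exact hdet
    obtain ⟨v, hv0, hv⟩ := Matrix.exists_mulVec_eq_zero_iff.mpr hdT
    refine ⟨v, hv0, fun j => ?_⟩
    have := congrFun hv j
    simpa [Matrix.mulVec, dotProduct] using this
  -- the polynomials
  set q : Fin (m + 1) → Polynomial ℂ :=
    fun i => ∏ k ∈ Finset.univ.erase i, (X - C (ζ k)) with hqdef
  set pn : Polynomial ℂ := ∏ k, (X - C (ζ k)) with hpndef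
  have hpnq : ∀ i, pn = (X - C (ζ i)) * q i :=
    fun i => (Finset.mul_prod_erase _ _ (Finset.mem_univ i)).symm
  set A : Polynomial ℂ := ∑ i, C (c i) * q i with hAdef
  set zl : ℂ := z (Fin.last (m + 1)) with hzldef
  set At : Polynomial ℂ := (X - C zl) * A with hAtdef
  -- Wronskian identity
  have hqkey : ∀ i, Polynomial.derivative (q i) * pn - q i * Polynomial.derivative pn
      = -(q i) ^ 2 := by
    intro i
    rw [hpnq i, derivative_mul, derivative_X_sub_C]
    ring
  have hkeyA : Polynomial.derivative A * pn - A * Polynomial.derivative pn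
      = -∑ i, C (c i) * (q i) ^ 2 := by
    have hdA : Polynomial.derivative A = ∑ i, C (c i) * Polynomial.derivative (q i) := by
      rw [hAdef, derivative_sum]
      exact Finset.sum_congr rfl fun i _ => derivative_C_mul _ _
    rw [hdA, hAdef, Finset.sum_mul, Finset.sum_mul, ← Finset.sum_sub_distrib,
      ← Finset.sum_neg_distrib]
    refine Finset.sum_congr rfl fun i _ => ?_
    rw [mul_assoc, mul_assoc, ← mul_sub, hqkey i]
    ring
  -- evaluation of the Wronskian at w j is zero
  have hW : ∀ j, (Polynomial.derivative A * pn - A * Polynomial.derivative pn).eval (w j)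
      = 0 := by
    intro j
    rw [hkeyA]
    have hq2 : ∀ i, ((q i).eval (w j)) ^ 2 = (pn.eval (w j)) ^ 2 * ((ζ i - w j) ^ 2)⁻¹ := by
      intro i
      have h1 : pn.eval (w j) = (w j - ζ i) * (q i).eval (w j) := by
        rw [hpnq i]; simp
      have hne : (ζ i - w j) ^ 2 ≠ 0 := pow_ne_zero _ (hζw i j)
      rw [h1, eq_comm, mul_inv_eq_iff_eq_mul₀ hne]
      ring
    simp only [eval_neg, eval_finset_sum, eval_mul, eval_C, eval_pow]
    rw [neg_eq_zero]
    calc ∑ i, c i * ((q i).eval (w j)) ^ 2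
        = (pn.eval (w j)) ^ 2 * ∑ i, ((ζ i - w j) ^ 2)⁻¹ * c i := by
          rw [Finset.mul_sum]
          exact Finset.sum_congr rfl fun i _ => by rw [hq2 i]; ring
      _ = 0 := by rw [hc j, mul_zero]
  -- p = leadingCoeff * (X - zl) * pn
  set pf : Polynomial ℂ := (X - C zl) * pn with hpfdef
  have hsplit : (∏ i : Fin (m + 2), (X - C (z i))) = pf := by
    rw [hpfdef, hpndef, Fin.prod_univ_castSucc (fun i : Fin (m + 2) => (X - C (z i)))]
    exact mul_comm _ _
  have hfac2 : p = C p.leadingCoeff * pf := by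
    conv_lhs => rw [hfac]
    rw [hsplit]
  -- derivative of At vanishes at each w j
  have hAt' : ∀ j, (Polynomial.derivative At).eval (w j) = 0 := by
    intro j
    have hid : Polynomial.derivative At * pf - At * Polynomial.derivative pf
        = (X - C zl) ^ 2 * (Polynomial.derivative A * pn - A * Polynomial.derivative pn) := by
      rw [hpfdef, hAtdef, derivative_mul, derivative_X_sub_C, derivative_mul,
        derivative_X_sub_C]
      ring
    have heval := congrArg (Polynomial.eval (w j)) hid
    have hW' := hW j
    simp only [eval_sub, eval_mul] at heval hW'
    rw [hW', mul_zero] at heval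
    -- derivative of pf at w j is zero since p' (w j) = 0
    have hd0 : (Polynomial.derivative pf).eval (w j) = 0 := by
      have hp' : Polynomial.derivative p
          = C p.leadingCoeff * Polynomial.derivative pf := by
        conv_lhs => rw [hfac2]
        rw [derivative_mul, derivative_C, zero_mul, zero_add]
      have h3 := hw j
      rw [hp'] at h3
      simp only [eval_mul, eval_C] at h3
      exact (mul_eq_zero.mp h3).resolve_left hlead
    have hne : pf.eval (w j) ≠ 0 := by
      intro h
      apply hpw j
      rw [hfac2]
      simp [h]
    rw [hd0, mul_zero, sub_zero] at heval
    exact (mul_eq_zero.mp heval).resolve_right hne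
  -- derivative of At is the zero polynomial
  have hdAt0 : Polynomial.derivative At = 0 := by
    by_contra h
    have hcard := card_le_of_roots _ h w hwinj hAt'
    have hdegA : A.natDegree ≤ m := by
      refine le_trans (natDegree_sum_le _ _) ?_
      rw [Finset.fold_max_le]
      refine ⟨Nat.zero_le _, fun i _ => ?_⟩
      simp only [Function.comp_apply]
      refine le_trans (natDegree_mul_le) ?_
      simp only [natDegree_C, zero_add]
      refine le_trans (natDegree_prod_le _ _) ?_
      have : ∀ k ∈ Finset.univ.erase i, (X - C (ζ k)).natDegree = 1 :=
        fun k _ => natDegree_X_sub_C _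
      rw [Finset.sum_congr rfl this]
      simp [Finset.card_erase_of_mem]
    have hdegAt : At.natDegree ≤ m + 1 := by
      refine le_trans (natDegree_mul_le) ?_
      have : (X - C zl).natDegree = 1 := natDegree_X_sub_C _
      omega
    have := natDegree_derivative_le At
    simp at hcard
    omega
  -- hence At is constant, and At (zl) = 0, so At = 0
  have hAt0 : At = 0 := by
    have h1 : At.natDegree = 0 := Polynomial.natDegree_eq_zero_of_derivative_eq_zero hdAt0
    have h2 : At = C (At.coeff 0) := eq_C_of_natDegree_eq_zero h1
    have h3 : At.eval zl = 0 := by rw [hAtdef]; simp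
    rw [h2] at h3 ⊢
    simp at h3
    rw [h3, map_zero]
  have hA0 : A = 0 := by
    rcases mul_eq_zero.mp hAt0 with h | h
    · exact absurd h (X_sub_C_ne_zero zl)
    · exact h
  -- contradiction: all c i = 0
  apply hc0
  funext i
  have hthis := congrArg (Polynomial.eval (ζ i)) hA0
  rw [hAdef] at hthis
  simp only [eval_finset_sum, eval_mul, eval_C, eval_zero] at hthis
  have hterm : ∀ k ∈ Finset.univ, k ≠ i → c k * (q k).eval (ζ i) = 0 := by
    intro k _ hk
    have : (q k).eval (ζ i) = 0 := by
      rw [hqdef]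
      simp only [eval_prod]
      refine Finset.prod_eq_zero (Finset.mem_erase.mpr ⟨fun h => hk h.symm, Finset.mem_univ i⟩) ?_
      simp
    rw [this, mul_zero]
  rw [Finset.sum_eq_single i hterm (fun h => absurd (Finset.mem_univ i) h)] at hthis
  have hqne : (q i).eval (ζ i) ≠ 0 := by
    rw [hqdef]
    simp only [eval_prod, eval_sub, eval_X, eval_C]
    refine Finset.prod_ne_zero_iff.mpr fun k hk => ?_
    have hki : k ≠ i := (Finset.mem_erase.mp hk).1
    exact sub_ne_zero.mpr fun h => hki (hζinj h.symm)
  have hci := (mul_eq_zero.mp hthis).resolve_right hqne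
  simpa using hci
end
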